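/- In X_6' (k = 6), for the class d = 4[L] − Σ_{i=1}^6 [E_i] (so a = 4, bᵢ = 1 for all i, and d·[E] = 2), the refined count of d-marked floor diagrams of genus 0 and type ((1,1),∅) is N_q^{(1,1),∅}(X_6',4[L]−Σ[E_i],0) = [2]_q⁴ + [4]_q² + 8[3]_q² + 44[2]_q² + 112. -/

import Mathlib

open LaurentPolynomial

open scoped Classical

noncomputable section FloorDiagrams

/-- The quantum integer `[n]_q = q^{−(n−1)/2} + q^{−(n−3)/2} + ⋯ + q^{(n−1)/2}`,
as a Laurent polynomial in the variable `t = q^{1/2}` (here `T m` denotes `t^m`). -/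
def qInt (n : ℕ) : LaurentPolynomial ℚ :=
  ∑ j ∈ Finset.range n, T (2 * (j : ℤ) - ((n : ℤ) - 1))

/-- A finite weighted oriented (multi)graph: `nV` vertices, `nE` edges, each edge `e`
having a source `src e`, a target `tgt e` and a positive integer weight `w e`. -/
structure WOGraph where
  nV : ℕ
  nE : ℕ
  src : Fin nE → Fin nV
  tgt : Fin nE → Fin nV
  w : Fin nE → ℕ
  w_pos : ∀ e, 0 < w e

namespace WOGraph

variable (G : WOGraph)

/-- The edge `e` is adjacent to the vertex `v`. -/
def Adj (e : Fin G.nE) (v : Fin G.nV) : Prop :=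
  G.src e = v ∨ G.tgt e = v

/-- One step of the (unoriented) adjacency relation between vertices. -/
def connStep (u v : Fin G.nV) : Prop :=
  ∃ e, (G.src e = u ∧ G.tgt e = v) ∨ (G.src e = v ∧ G.tgt e = u)

/-- The graph is connected. -/
def Connected : Prop :=
  0 < G.nV ∧ ∀ u v, Relation.ReflTransGen G.connStep u v

/-- One step of the oriented relation between vertices. -/
def dirStep (u v : Fin G.nV) : Prop :=
  ∃ e, G.src e = u ∧ G.tgt e = v

/-- The oriented graph is acyclic: there is no non-trivial oriented cycle. -/
def Acyclic : Prop :=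
  ∀ v, ¬ Relation.TransGen G.dirStep v v

/-- The number of edges adjacent to a vertex (with multiplicity). -/
def degree (v : Fin G.nV) : ℕ :=
  (Finset.univ.filter fun e => G.src e = v).card +
    (Finset.univ.filter fun e => G.tgt e = v).card

/-- A leaf is a vertex adjacent to exactly one edge. -/
def IsLeaf (v : Fin G.nV) : Prop := G.degree v = 1

/-- `Vert^∞(G)`: leaves all of whose adjacent edges are outgoing. -/
def InfVert (v : Fin G.nV) : Prop :=
  G.IsLeaf v ∧ ∀ e, G.Adj e v → G.src e = v

/-- `Edge^∞(G)`: edges adjacent to a vertex of `Vert^∞(G)`. -/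
def InfEdge (e : Fin G.nE) : Prop :=
  ∃ v, G.Adj e v ∧ G.InfVert v

/-- The divergence of a vertex: sum of weights of incoming edges minus sum of weights of
outgoing edges. -/
def div (v : Fin G.nV) : ℤ :=
  (∑ e ∈ Finset.univ.filter (fun e => G.tgt e = v), (G.w e : ℤ)) -
    (∑ e ∈ Finset.univ.filter (fun e => G.src e = v), (G.w e : ℤ))

/-- A sink is a vertex all of whose adjacent edges are oriented toward it. -/
def IsSink (v : Fin G.nV) : Prop :=
  ∀ e, G.Adj e v → G.tgt e = v

/-- One step of the partial order on `Vert ⊔ Edge` induced by the orientation: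
a vertex is below each of its outgoing edges, and each edge is below its target. -/
def veStep : (Fin G.nV ⊕ Fin G.nE) → (Fin G.nV ⊕ Fin G.nE) → Prop
  | Sum.inl u, Sum.inr e => G.src e = u
  | Sum.inr e, Sum.inl v => G.tgt e = v
  | _, _ => False

end WOGraph

/-- `G` is a floor diagram (relative to a conic) of genus `g` and degree `a`. -/
structure IsFloorDiagram (G : WOGraph) (g a : ℕ) : Prop where
  conn : G.Connected
  acyclic : G.Acyclic
  betti : G.nE + 1 = G.nV + g
  div_floor : ∀ v, ¬ G.InfVert v → G.div v = 2 ∨ G.div v = 4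
  div_inf : ∀ v, G.InfVert v → G.div v ≤ -1
  sink_of_two : ∀ v, ¬ G.InfVert v → G.div v = 2 → G.IsSink v
  total_div : (∑ v ∈ Finset.univ.filter (fun v => G.InfVert v), G.div v) = -(2 * (a : ℤ))

/-- The marking domain `A₀ ⊔ A₁ ⊔ ⋯ ⊔ A_k`, where
`A₀ = {1, …, a − 1 + g + l(μ₁) + l(μ₂)}` and `|Aᵢ| = bᵢ`. -/
def MarkDom (k g a : ℕ) (b : Fin k → ℕ) (l1 l2 : ℕ) : Type :=
  Fin (a + g + l1 + l2 - 1) ⊕ (Σ i : Fin k, Fin (b i))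

/-- `m` is a `d`-marking of type `(μ₁, μ₂)` of the floor diagram `G` of genus `g` and
degree `a`, where `d` is encoded by `a = d·[L]` and `bᵢ = d·[Eᵢ]`. -/
structure IsMarking (k g a : ℕ) (b : Fin k → ℕ) (μ₁ μ₂ : List ℕ) (G : WOGraph)
    (m : MarkDom k g a b μ₁.length μ₂.length → Fin G.nV ⊕ Fin G.nE) : Prop where
  inj : Function.Injective m
  /-- `m` is increasing: on `A₀` (with its natural order) it is compatible with the strict
  partial order on `Vert ⊔ Edge` induced by the orientation; the elements of
  `A₁, …, A_k` are incomparable, hence impose no condition. -/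
  incr : ∀ i j : Fin (a + g + μ₁.length + μ₂.length - 1),
    Relation.TransGen G.veStep (m (Sum.inl i)) (m (Sum.inl j)) → i < j
  /-- No floor of degree `1` is in the image of `m`. -/
  no_floor_one : ∀ v, ¬ G.InfVert v → G.div v = 2 → ∀ p, m p ≠ Sum.inl v
  /-- For `v ∈ Vert^∞` with adjacent edge `e`, exactly one of `v`, `e` is in the image. -/
  inf_pair : ∀ v, G.InfVert v → ∀ e, G.Adj e v →
    Xor' (∃ p, m p = Sum.inl v) (∃ p, m p = Sum.inr e)
  /-- `m(A₁ ∪ ⋯ ∪ A_k) ⊆ Vert^∞`. -/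
  exc_vert : ∀ (i : Fin k) (p : Fin (b i)),
    ∃ v, G.InfVert v ∧ m (Sum.inr ⟨i, p⟩) = Sum.inl v
  /-- `m({1, …, l(μ₁)}) = m(A₀) ∩ Vert^∞`. -/
  mu1_vert : ∀ i : Fin (a + g + μ₁.length + μ₂.length - 1),
    (∃ v, G.InfVert v ∧ m (Sum.inl i) = Sum.inl v) ↔ (i : ℕ) < μ₁.length
  /-- Every floor is adjacent to at most one edge adjacent to a vertex of `m(Aᵢ)`. -/
  floor_once : ∀ (i : Fin k) (v : Fin G.nV), ¬ G.InfVert v →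
    ∀ e e' : Fin G.nE, G.Adj e v → G.Adj e' v →
      (∃ (p : Fin (b i)) (u : Fin G.nV), m (Sum.inr ⟨i, p⟩) = Sum.inl u ∧ G.Adj e u) →
      (∃ (p : Fin (b i)) (u : Fin G.nV), m (Sum.inr ⟨i, p⟩) = Sum.inl u ∧ G.Adj e' u) →
      e = e'
  /-- For `i ∈ {1, …, l(μ₁)}`, the edge adjacent to `m(i)` has weight `μ₁^{(i)}`. -/
  mu1_weight : ∀ (i : Fin (a + g + μ₁.length + μ₂.length - 1)) (h : (i : ℕ) < μ₁.length)
    (v : Fin G.nV) (e : Fin G.nE),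
      m (Sum.inl i) = Sum.inl v → G.Adj e v → G.w e = μ₁.get ⟨(i : ℕ), h⟩
  /-- Exactly `l(μ₂)` edges of `Edge^∞` are in the image of `m|_{A₀}`, and their weights
  are the entries of `μ₂`. -/
  mu2_edges :
    ((Finset.univ.filter fun e : Fin G.nE =>
        G.InfEdge e ∧ ∃ i : Fin (a + g + μ₁.length + μ₂.length - 1),
          m (Sum.inl i) = Sum.inr e).val.map G.w) = (μ₂ : Multiset ℕ)

/-- A `d`-marked floor diagram of genus `g` and type `(μ₁, μ₂)`, where the class `d` is
encoded by `a = d·[L]` and `bᵢ = d·[Eᵢ]`. -/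
structure MarkedFD (k g a : ℕ) (b : Fin k → ℕ) (μ₁ μ₂ : List ℕ) where
  G : WOGraph
  m : MarkDom k g a b μ₁.length μ₂.length → Fin G.nV ⊕ Fin G.nE
  fd : IsFloorDiagram G g a
  marking : IsMarking k g a b μ₁ μ₂ G m

namespace MarkedFD

variable {k g a : ℕ} {b : Fin k → ℕ} {μ₁ μ₂ : List ℕ}

/-- Equivalence of marked floor diagrams: an isomorphism of weighted oriented graphs
together with a bijection of the marking sets which is the identity on `A₀` and maps
each `Aᵢ` (`i ≥ 1`) bijectively onto itself, compatible with the markings. -/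
def Equivalent (X Y : MarkedFD k g a b μ₁ μ₂) : Prop :=
  ∃ (φV : Fin X.G.nV ≃ Fin Y.G.nV) (φE : Fin X.G.nE ≃ Fin Y.G.nE)
    (ψ : MarkDom k g a b μ₁.length μ₂.length ≃ MarkDom k g a b μ₁.length μ₂.length),
      (∀ e, Y.G.src (φE e) = φV (X.G.src e)) ∧
      (∀ e, Y.G.tgt (φE e) = φV (X.G.tgt e)) ∧
      (∀ e, Y.G.w (φE e) = X.G.w e) ∧
      (∀ i, ψ (Sum.inl i) = Sum.inl i) ∧
      (∀ (i : Fin k) (p : Fin (b i)), ∃ p' : Fin (b i),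
        ψ (Sum.inr ⟨i, p⟩) = Sum.inr ⟨i, p'⟩) ∧
      (∀ p, Y.m (ψ p) = Sum.map φV φE (X.m p))

variable (X : MarkedFD k g a b μ₁ μ₂)

/-- `Edge^{μ₁}`: edges adjacent to `m({1, …, l(μ₁)})`. -/
def EdgeMu1 : Finset (Fin X.G.nE) :=
  Finset.univ.filter fun e =>
    ∃ i : Fin (a + g + μ₁.length + μ₂.length - 1), (i : ℕ) < μ₁.length ∧
      ∃ v, X.m (Sum.inl i) = Sum.inl v ∧ X.G.Adj e v

/-- `Edge^{μ₂}`: the `l(μ₂)` edges of `Edge^∞` in the image of `m|_{A₀}`. -/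
def EdgeMu2 : Finset (Fin X.G.nE) :=
  Finset.univ.filter fun e =>
    X.G.InfEdge e ∧ ∃ i : Fin (a + g + μ₁.length + μ₂.length - 1),
      X.m (Sum.inl i) = Sum.inr e

/-- `Edge°`: edges not in `Edge^∞`. -/
def EdgeO : Finset (Fin X.G.nE) :=
  Finset.univ.filter fun e => ¬ X.G.InfEdge e

/-- The q-refined (Block–Göttsche) multiplicity of a marked floor diagram:
`∏_{e∈Edge^{μ₂}} [w(e)]_q/w(e) · ∏_{e∈Edge^{μ₁}} [w(e)]_q/w(e) · ∏_{e∈Edge^{μ₂}} w(e)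
 · ∏_{e∈Edge°} [w(e)]_q²`. -/
def multq : LaurentPolynomial ℚ :=
  (∏ e ∈ X.EdgeMu2, (C ((X.G.w e : ℚ)⁻¹) * qInt (X.G.w e))) *
    (∏ e ∈ X.EdgeMu1, (C ((X.G.w e : ℚ)⁻¹) * qInt (X.G.w e))) *
    (∏ e ∈ X.EdgeMu2, C ((X.G.w e : ℚ))) *
    (∏ e ∈ X.EdgeO, (qInt (X.G.w e)) ^ 2)

/-- The complex multiplicity of a marked floor diagram:
`∏_i μ₂^{(i)} · ∏_{e∈Edge°} w(e)²`. -/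
def multC : ℚ :=
  (μ₂.map fun x => (x : ℚ)).prod * ∏ e ∈ X.EdgeO, (X.G.w e : ℚ) ^ 2

end MarkedFD

/-- `N` is the refined count `N_q^{μ₁,μ₂}(X_k', d, g)` of `d`-marked floor diagrams of
genus `g` and type `(μ₁, μ₂)`: the sum of the q-refined multiplicities over a (finite) set
of representatives of the equivalence classes of marked floor diagrams. -/
def IsRefinedCount (k g a : ℕ) (b : Fin k → ℕ) (μ₁ μ₂ : List ℕ)
    (N : LaurentPolynomial ℚ) : Prop :=
  ∃ (ι : Type) (hι : Fintype ι) (rep : ι → MarkedFD k g a b μ₁ μ₂),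
    (∀ X : MarkedFD k g a b μ₁ μ₂, ∃! i : ι, X.Equivalent (rep i)) ∧
    N = ∑ i ∈ @Finset.univ ι hι, (rep i).multq

/-- `N` is the complex count `N_ℂ^{μ₁,μ₂}(X_k', d, g)` of `d`-marked floor diagrams of
genus `g` and type `(μ₁, μ₂)`. -/
def IsComplexCount (k g a : ℕ) (b : Fin k → ℕ) (μ₁ μ₂ : List ℕ) (N : ℚ) : Prop :=
  ∃ (ι : Type) (hι : Fintype ι) (rep : ι → MarkedFD k g a b μ₁ μ₂),
    (∀ X : MarkedFD k g a b μ₁ μ₂, ∃! i : ι, X.Equivalent (rep i)) ∧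
    N = ∑ i ∈ @Finset.univ ι hι, (rep i).multC

end FloorDiagrams

noncomputable section Aux

namespace WOGraph
variable (G : WOGraph)

lemma sum_div_eq_zero : ∑ v, G.div v = 0 := by
  unfold WOGraph.div
  rw [Finset.sum_sub_distrib,
      Finset.sum_fiberwise Finset.univ G.tgt (fun e => (G.w e : ℤ)),
      Finset.sum_fiberwise Finset.univ G.src (fun e => (G.w e : ℤ)), sub_self]

lemma no_loop (hA : G.Acyclic) (e : Fin G.nE) : G.src e ≠ G.tgt e := by
  intro h
  exact hA (G.tgt e) (Relation.TransGen.single ⟨e, h, rfl⟩)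

lemma connected_all {P : Fin G.nV → Prop} (hC : G.Connected)
    (hcl : ∀ e, P (G.src e) ↔ P (G.tgt e)) {u v : Fin G.nV} (hu : P u) : P v := by
  have h := hC.2 u v
  induction h with
  | refl => exact hu
  | tail _ h ih =>
      obtain ⟨e, ⟨hs, ht⟩ | ⟨hs, ht⟩⟩ := h
      · rw [← ht]; exact (hcl e).1 (by rwa [hs])
      · rw [← hs]; exact (hcl e).2 (by rwa [ht])

lemma infVert_struct {v : Fin G.nV} (h : G.InfVert v) :
    ∃ e, G.src e = v ∧ (∀ e', G.Adj e' v → e' = e) ∧ (∀ e', G.tgt e' ≠ v) ∧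
      G.div v = -(G.w e : ℤ) := by
  obtain ⟨hleaf, hout⟩ := h
  unfold WOGraph.IsLeaf WOGraph.degree at hleaf
  have htgt : ∀ e', G.tgt e' ≠ v := by
    intro e' he'
    have hs : G.src e' = v := hout e' (Or.inr he')
    have h1 : 1 ≤ (Finset.univ.filter fun e => G.src e = v).card :=
      Finset.card_pos.2 ⟨e', by simp [hs]⟩
    have h2 : 1 ≤ (Finset.univ.filter fun e => G.tgt e = v).card :=
      Finset.card_pos.2 ⟨e', by simp [he']⟩
    omega
  have h0 : (Finset.univ.filter fun e => G.tgt e = v) = ∅ := by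
    rw [Finset.filter_eq_empty_iff]; intro e _; exact htgt e
  have h1 : (Finset.univ.filter fun e => G.src e = v).card = 1 := by
    rw [h0] at hleaf; simpa using hleaf
  obtain ⟨e, he⟩ := Finset.card_eq_one.1 h1
  have hsrc : G.src e = v := by
    have : e ∈ Finset.univ.filter fun e => G.src e = v := he ▸ Finset.mem_singleton_self e
    simpa using this
  refine ⟨e, hsrc, ?_, htgt, ?_⟩
  · intro e' ha
    have hs : G.src e' = v := hout e' ha
    have : e' ∈ ({e} : Finset _) := he ▸ (by simp [hs])
    simpa using this
  · unfold WOGraph.div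
    rw [he, h0]
    simp

end WOGraph

/-- strict potential along a relation bounds TransGen. -/
lemma transGen_lt {α : Type*} {r : α → α → Prop} (ρ : α → ℕ)
    (h : ∀ x y, r x y → ρ x < ρ y) {x y : α} (hxy : Relation.TransGen r x y) :
    ρ x < ρ y := by
  induction hxy with
  | single h' => exact h _ _ h'
  | tail _ h' ih => exact lt_trans ih (h _ _ h')

namespace MarkedFD

variable {k g a : ℕ} {μ₁ μ₂ : List ℕ}

lemma psi_fix {l1 l2 : ℕ}
    (ψ : MarkDom k g a (fun _ => 1) l1 l2 ≃ MarkDom k g a (fun _ => 1) l1 l2)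
    (hψl : ∀ i, ψ (Sum.inl i) = Sum.inl i)
    (hψr : ∀ (i : Fin k) (p : Fin 1), ∃ p' : Fin 1, ψ (Sum.inr ⟨i, p⟩) = Sum.inr ⟨i, p'⟩)
    (p : MarkDom k g a (fun _ => 1) l1 l2) : ψ p = p := by
  match p with
  | Sum.inl i => exact hψl i
  | Sum.inr ⟨i, p⟩ =>
      obtain ⟨p', hp'⟩ := hψr i p
      rw [hp']
      congr 1
      congr 1
      · exact Fin.ext (by omega)

lemma Equivalent.symm' {X Y : MarkedFD k g a (fun _ => 1) μ₁ μ₂}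
    (h : X.Equivalent Y) : Y.Equivalent X := by
  obtain ⟨φV, φE, ψ, hsrc, htgt, hw, hψl, hψr, hm⟩ := h
  have hψ : ∀ p, ψ p = p := psi_fix ψ hψl hψr
  have hψs : ∀ p, ψ.symm p = p := fun p => (Equiv.symm_apply_eq ψ).2 (hψ p).symm
  refine ⟨φV.symm, φE.symm, ψ.symm, ?_, ?_, ?_, ?_, ?_, ?_⟩
  · intro e
    have := hsrc (φE.symm e)
    rw [Equiv.apply_symm_apply] at this
    rw [this, Equiv.symm_apply_apply]
  · intro e
    have := htgt (φE.symm e)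
    rw [Equiv.apply_symm_apply] at this
    rw [this, Equiv.symm_apply_apply]
  · intro e
    have := hw (φE.symm e)
    rw [Equiv.apply_symm_apply] at this
    exact this.symm
  · intro i; exact hψs _
  · intro i p; exact ⟨p, hψs _⟩
  · intro p
    rw [hψs]
    have := hm p
    rw [hψ] at this
    rw [this]
    cases X.m p <;> simp

lemma Equivalent.trans' {X Y Z : MarkedFD k g a (fun _ => 1) μ₁ μ₂}
    (h1 : X.Equivalent Y) (h2 : Y.Equivalent Z) : X.Equivalent Z := by
  obtain ⟨φV, φE, ψ, hsrc, htgt, hw, hψl, hψr, hm⟩ := h1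
  obtain ⟨φV', φE', ψ', hsrc', htgt', hw', hψl', hψr', hm'⟩ := h2
  have hψ : ∀ p, ψ p = p := psi_fix ψ hψl hψr
  have hψ' : ∀ p, ψ' p = p := psi_fix ψ' hψl' hψr'
  refine ⟨φV.trans φV', φE.trans φE', ψ.trans ψ', ?_, ?_, ?_, ?_, ?_, ?_⟩
  · intro e; simp [hsrc, hsrc']
  · intro e; simp [htgt, htgt']
  · intro e; simp [hw, hw']
  · intro i; show ψ' (ψ (Sum.inl i)) = Sum.inl i; exact (congrArg ψ' (hψ _)).trans (hψ' _)
  · intro i p; exact ⟨p, by show ψ' (ψ _) = _; exact (congrArg ψ' (hψ _)).trans (hψ' _)⟩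
  · intro p
    simp only [Equiv.trans_apply, hψ, hψ']
    have h1 := hm' p; rw [hψ'] at h1
    have h2 := hm p; rw [hψ] at h2
    rw [h1, h2]
    cases X.m p <;> simp

end MarkedFD
end Aux

noncomputable section StdA
namespace FD4
open WOGraph

/-- vertex of label ℓ in family A -/
abbrev labA (ℓ : Fin 8) : Fin 10 := ℓ.succ.succ

lemma labA_inj : Function.Injective labA := by decide

@[reducible] def stdA (S : Finset (Fin 8)) (hS : S.card ≤ 3) : WOGraph where
  nV := 10
  nE := 9
  src := Fin.cons 0 fun ℓ => labA ℓ
  tgt := Fin.cons 1 fun ℓ => if ℓ ∈ S then 1 else 0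
  w := Fin.cons (4 - S.card) fun _ => 1
  w_pos := by
    intro e
    refine Fin.cases ?_ ?_ e
    · simp only [Fin.cons_zero]; omega
    · intro ℓ; simp

variable {S : Finset (Fin 8)} {hS : S.card ≤ 3}

lemma stdA_src0 : (stdA S hS).src (0 : Fin 9) = (0 : Fin 10) := rfl
lemma stdA_tgt0 : (stdA S hS).tgt (0 : Fin 9) = (1 : Fin 10) := rfl
lemma stdA_w0 : (stdA S hS).w (0 : Fin 9) = 4 - S.card := rfl
lemma stdA_srcs (ℓ : Fin 8) : (stdA S hS).src (ℓ.succ : Fin 9) = labA ℓ := rfl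
lemma stdA_tgts (ℓ : Fin 8) :
    (stdA S hS).tgt (ℓ.succ : Fin 9) = if ℓ ∈ S then (1 : Fin 10) else (0 : Fin 10) := rfl
lemma stdA_ws (ℓ : Fin 8) : (stdA S hS).w (ℓ.succ : Fin 9) = 1 := rfl

lemma vcaseA : ∀ v : Fin 10, v = 0 ∨ v = 1 ∨ ∃ ℓ : Fin 8, v = labA ℓ := by decide

lemma ecaseA : ∀ e : Fin 9, e = 0 ∨ ∃ ℓ : Fin 8, e = ℓ.succ := by decide

lemma stdA_tgt_val_le (e : Fin 9) : ((stdA S hS).tgt e).val ≤ 1 := by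
  refine Fin.cases ?_ ?_ e
  · rw [stdA_tgt0]; exact le_refl _
  · intro ℓ; rw [stdA_tgts]; split <;> simp

lemma stdA_tgt_ne_lab (e : Fin 9) (ℓ : Fin 8) : (stdA S hS).tgt e ≠ labA ℓ := by
  intro h
  have h1 := stdA_tgt_val_le (S := S) (hS := hS) e
  rw [h] at h1
  simp [labA, Fin.val_succ] at h1

lemma stdA_src_eq_lab {e : Fin 9} {ℓ : Fin 8} (h : (stdA S hS).src e = labA ℓ) :
    e = ℓ.succ := by
  rcases ecaseA e with rfl | ⟨ℓ', rfl⟩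
  · rw [stdA_src0] at h
    exact absurd (congrArg Fin.val h) (by simp [labA])
  · rw [stdA_srcs] at h
    rw [labA_inj h]

lemma stdA_adj_lab {e : Fin 9} {ℓ : Fin 8} (h : (stdA S hS).Adj e (labA ℓ)) :
    e = ℓ.succ := by
  rcases h with h | h
  · exact stdA_src_eq_lab h
  · exact absurd h (stdA_tgt_ne_lab e ℓ)

lemma stdA_filter_src_lab (ℓ : Fin 8) :
    (Finset.univ.filter fun e => (stdA S hS).src e = labA ℓ) = ({ℓ.succ} : Finset (Fin 9)) := by
  ext e
  simp only [Finset.mem_filter, Finset.mem_univ, true_and, Finset.mem_singleton]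
  constructor
  · exact stdA_src_eq_lab (S := S) (hS := hS)
  · rintro rfl; exact stdA_srcs (S := S) (hS := hS) ℓ

lemma stdA_filter_tgt_lab (ℓ : Fin 8) :
    (Finset.univ.filter fun e => (stdA S hS).tgt e = labA ℓ) = (∅ : Finset (Fin 9)) := by
  rw [Finset.filter_eq_empty_iff]
  intro e _
  exact stdA_tgt_ne_lab e ℓ

lemma stdA_div_lab (ℓ : Fin 8) : (stdA S hS).div (labA ℓ) = -1 := by
  unfold WOGraph.div
  rw [stdA_filter_src_lab, stdA_filter_tgt_lab]
  rw [Finset.sum_empty, Finset.sum_singleton, stdA_ws]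
  simp

lemma stdA_infVert_lab (ℓ : Fin 8) : (stdA S hS).InfVert (labA ℓ) := by
  constructor
  · show (stdA S hS).degree (labA ℓ) = 1
    unfold WOGraph.degree
    rw [stdA_filter_src_lab, stdA_filter_tgt_lab]
    simp
  · intro e h
    rcases h with h | h
    · exact h
    · exact absurd h (stdA_tgt_ne_lab e ℓ)

lemma stdA_not_infVert_0 : ¬ (stdA S hS).InfVert (0 : Fin 10) := by
  intro h
  have hex : ∃ ℓ : Fin 8, ℓ ∉ S := by
    by_contra hc
    push_neg at hc
    have : S = Finset.univ := Finset.eq_univ_iff_forall.2 hc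
    rw [this] at hS
    simp [Finset.card_univ] at hS
  obtain ⟨ℓ, hℓ⟩ := hex
  have hadj : (stdA S hS).Adj (ℓ.succ : Fin 9) (0 : Fin 10) := by
    right
    rw [stdA_tgts]
    simp [hℓ]
  have h2 := h.2 _ hadj
  rw [stdA_srcs] at h2
  exact absurd (congrArg Fin.val h2) (by simp [labA])

lemma stdA_not_infVert_1 : ¬ (stdA S hS).InfVert (1 : Fin 10) := by
  intro h
  have hadj : (stdA S hS).Adj (0 : Fin 9) (1 : Fin 10) := Or.inr stdA_tgt0
  have h2 := h.2 _ hadj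
  rw [stdA_src0] at h2
  exact absurd (congrArg Fin.val h2) (by simp)

lemma stdA_not_infVert_iff (v : Fin 10) :
    ¬ (stdA S hS).InfVert v ↔ (v = 0 ∨ v = 1) := by
  constructor
  · intro h
    rcases vcaseA v with rfl | rfl | ⟨ℓ, rfl⟩
    · exact Or.inl rfl
    · exact Or.inr rfl
    · exact absurd (stdA_infVert_lab ℓ) h
  · rintro (rfl | rfl)
    · exact stdA_not_infVert_0
    · exact stdA_not_infVert_1

lemma card_compl_filter (S : Finset (Fin 8)) :
    (Finset.univ.filter fun ℓ => ℓ ∉ S).card = 8 - S.card := by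
  have h2 : (Finset.univ.filter fun ℓ => ℓ ∈ S).card = S.card := by
    congr 1
    ext ℓ; simp
  have h3 := Finset.card_filter_add_card_filter_not
    (s := (Finset.univ : Finset (Fin 8))) (p := fun ℓ => ℓ ∈ S)
  simp only [Finset.card_univ, Fintype.card_fin] at h3
  rw [h2] at h3
  omega

lemma stdA_div_eq (v : Fin 10) : (stdA S hS).div v =
    (∑ e : Fin 9, if (stdA S hS).tgt e = v then ((stdA S hS).w e : ℤ) else 0) -
    (∑ e : Fin 9, if (stdA S hS).src e = v then ((stdA S hS).w e : ℤ) else 0) := by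
  unfold WOGraph.div
  rw [Finset.sum_filter, Finset.sum_filter]
  try rfl

lemma sum9 (f : Fin 9 → ℤ) : ∑ e, f e = f 0 + ∑ ℓ : Fin 8, f ℓ.succ := Fin.sum_univ_succ f

lemma stdA_div_0 : (stdA S hS).div (0 : Fin 10) = 4 := by
  rw [stdA_div_eq, sum9, sum9]
  have h1 : ∀ ℓ : Fin 8, (if (stdA S hS).tgt ℓ.succ = (0 : Fin 10)
      then ((stdA S hS).w ℓ.succ : ℤ) else 0) = if ℓ ∉ S then 1 else 0 := by
    intro ℓ
    rw [stdA_tgts, stdA_ws]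
    by_cases h : ℓ ∈ S <;> simp [h, Fin.ext_iff]
  have h2 : ∀ ℓ : Fin 8, (if (stdA S hS).src ℓ.succ = (0 : Fin 10)
      then ((stdA S hS).w ℓ.succ : ℤ) else 0) = 0 := by
    intro ℓ
    rw [stdA_srcs]
    have : labA ℓ ≠ (0 : Fin 10) := by have := (show ∀ m : Fin 8, labA m ≠ (0 : Fin 10) by decide); exact this ℓ
    simp [this]
  rw [Finset.sum_congr rfl (fun ℓ _ => h1 ℓ), Finset.sum_congr rfl (fun ℓ _ => h2 ℓ)]
  rw [Finset.sum_boole, card_compl_filter]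
  have hcond1 : ¬ ((stdA S hS).tgt (0:Fin 9) = (0 : Fin 10)) := by rw [stdA_tgt0]; show (1:Fin 10) ≠ (0:Fin 10); decide
  have hcond2 : (stdA S hS).src (0:Fin 9) = (0 : Fin 10) := stdA_src0
  rw [if_neg hcond1, if_pos hcond2, stdA_w0]
  simp only [Finset.sum_const_zero, add_zero, zero_add]
  omega

lemma stdA_div_1 : (stdA S hS).div (1 : Fin 10) = 4 := by
  rw [stdA_div_eq, sum9, sum9]
  have h1 : ∀ ℓ : Fin 8, (if (stdA S hS).tgt ℓ.succ = (1 : Fin 10)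
      then ((stdA S hS).w ℓ.succ : ℤ) else 0) = if ℓ ∈ S then 1 else 0 := by
    intro ℓ
    rw [stdA_tgts, stdA_ws]
    by_cases h : ℓ ∈ S <;> simp [h, Fin.ext_iff]
  have h2 : ∀ ℓ : Fin 8, (if (stdA S hS).src ℓ.succ = (1 : Fin 10)
      then ((stdA S hS).w ℓ.succ : ℤ) else 0) = 0 := by
    intro ℓ
    rw [stdA_srcs]
    have : labA ℓ ≠ (1 : Fin 10) := by have := (show ∀ m : Fin 8, labA m ≠ (1 : Fin 10) by decide); exact this ℓ
    simp [this]
  rw [Finset.sum_congr rfl (fun ℓ _ => h1 ℓ), Finset.sum_congr rfl (fun ℓ _ => h2 ℓ)]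
  rw [Finset.sum_boole]
  have hfS : (Finset.univ.filter fun ℓ => ℓ ∈ S).card = S.card := by
    congr 1; ext ℓ; simp
  rw [hfS]
  have hcond1 : (stdA S hS).tgt (0:Fin 9) = (1 : Fin 10) := stdA_tgt0
  have hcond2 : ¬ ((stdA S hS).src (0:Fin 9) = (1 : Fin 10)) := by rw [stdA_src0]; show (0:Fin 10) ≠ (1:Fin 10); decide
  rw [if_pos hcond1, if_neg hcond2, stdA_w0]
  simp only [Finset.sum_const_zero, add_zero, zero_add]
  omega

end FD4
end StdA

noncomputable section StdA2
namespace FD4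
open WOGraph

/-- label set index: labels 2..7 correspond to the six exceptional marks -/
def labIdx (i : Fin 6) : Fin 8 := ⟨i.val + 2, by omega⟩

/-- the A₀-marking values of family A -/
def mA0 (i : Fin 5) : (Fin 10) ⊕ (Fin 9) :=
  if i.val = 0 then Sum.inl (labA 0)
  else if i.val = 1 then Sum.inl (labA 1)
  else if i.val = 2 then Sum.inl 0
  else if i.val = 3 then Sum.inr 0
  else Sum.inl 1

/-- the marking of family A (independent of `S`) -/
def mA : (Fin 5 ⊕ (Σ _ : Fin 6, Fin 1)) → (Fin 10) ⊕ (Fin 9) :=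
  Sum.elim mA0 (fun q => Sum.inl (labA (labIdx q.1)))

lemma mA_inj : Function.Injective mA := by decide

lemma mA_lab_exists : ∀ ℓ : Fin 8, ∃ p, mA p = Sum.inl (labA ℓ) := by decide

lemma mA_no_inf_edge : ∀ p, ∀ ℓ : Fin 8, mA p ≠ Sum.inr ℓ.succ := by decide

/-- levels for the order check -/
def ρA : (Fin 10) ⊕ (Fin 9) → ℕ
  | Sum.inl v => if v = 0 then 2 else if v = 1 then 4 else 0
  | Sum.inr e => if e = 0 then 3 else 1

lemma ρA_mono : ∀ i j : Fin 5, ¬ i < j → ρA (mA (Sum.inl j)) ≤ ρA (mA (Sum.inl i)) := by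
  decide

variable {S : Finset (Fin 8)} {hS : S.card ≤ 3}

lemma stdA_filter_infVert :
    (Finset.univ.filter fun v : Fin 10 => (stdA S hS).InfVert v) = Finset.univ.image labA := by
  ext v
  simp only [Finset.mem_filter, Finset.mem_univ, true_and, Finset.mem_image]
  constructor
  · intro hv
    rcases vcaseA v with rfl | rfl | ⟨ℓ, rfl⟩
    · exact absurd hv stdA_not_infVert_0
    · exact absurd hv stdA_not_infVert_1
    · exact ⟨ℓ, rfl⟩
  · rintro ⟨ℓ, -, rfl⟩; exact stdA_infVert_lab ℓ

lemma stdA_total_div :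
    (∑ v ∈ Finset.univ.filter (fun v : Fin 10 => (stdA S hS).InfVert v), (stdA S hS).div v)
      = -(2 * (4 : ℤ)) := by
  rw [stdA_filter_infVert, Finset.sum_image (fun x _ y _ h => labA_inj h)]
  rw [Finset.sum_congr rfl (fun ℓ _ => stdA_div_lab ℓ)]
  simp

lemma stdA_conn : (stdA S hS).Connected := by
  refine ⟨by norm_num, ?_⟩
  have hsymm : Symmetric (stdA S hS).connStep := by
    rintro u v ⟨e, h⟩; exact ⟨e, h.symm⟩
  have h0 : ∀ v : Fin 10, Relation.ReflTransGen (stdA S hS).connStep v (0 : Fin 10) := by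
    intro v
    rcases vcaseA v with rfl | rfl | ⟨ℓ, rfl⟩
    · exact Relation.ReflTransGen.refl
    · exact Relation.ReflTransGen.single ⟨(0 : Fin 9), Or.inr ⟨stdA_src0, stdA_tgt0⟩⟩
    · have step1 : (stdA S hS).connStep (labA ℓ) ((stdA S hS).tgt ℓ.succ) :=
        ⟨(ℓ.succ : Fin 9), Or.inl ⟨stdA_srcs ℓ, rfl⟩⟩
      have step2 : Relation.ReflTransGen (stdA S hS).connStep
          ((stdA S hS).tgt ℓ.succ) (0 : Fin 10) := by
        rw [stdA_tgts]
        split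
        · exact Relation.ReflTransGen.single ⟨(0 : Fin 9), Or.inr ⟨stdA_src0, stdA_tgt0⟩⟩
        · exact Relation.ReflTransGen.refl
      exact Relation.ReflTransGen.head step1 step2
  intro u v
  exact (h0 u).trans (by haveI : Std.Symm (stdA S hS).connStep := ⟨fun _ _ h => hsymm h⟩; exact Std.Symm.symm _ _ (h0 v))

lemma stdA_acyclic : (stdA S hS).Acyclic := by
  intro v hv
  have hstrict : ∀ x y : Fin 10, (stdA S hS).dirStep x y →
      (fun x : Fin 10 => if x = 0 then 1 else if x = 1 then 2 else 0) x
        < (fun x : Fin 10 => if x = 0 then 1 else if x = 1 then 2 else 0) y := by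
    rintro x y ⟨e, hs, ht⟩
    rcases ecaseA e with rfl | ⟨ℓ, rfl⟩
    · rw [stdA_src0] at hs; rw [stdA_tgt0] at ht
      subst hs; subst ht
      show (if (0:Fin 10) = 0 then 1 else if (0:Fin 10) = 1 then 2 else 0)
        < (if (1:Fin 10) = 0 then 1 else if (1:Fin 10) = 1 then 2 else 0)
      decide
    · rw [stdA_srcs] at hs; rw [stdA_tgts] at ht
      subst hs
      by_cases hm : ℓ ∈ S
      · rw [if_pos hm] at ht; subst ht
        show (if labA ℓ = 0 then 1 else if labA ℓ = 1 then 2 else 0)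
          < (if (1:Fin 10) = 0 then 1 else if (1:Fin 10) = 1 then 2 else 0)
        clear hm; revert ℓ; decide
      · rw [if_neg hm] at ht; subst ht
        show (if labA ℓ = 0 then 1 else if labA ℓ = 1 then 2 else 0)
          < (if (0:Fin 10) = 0 then 1 else if (0:Fin 10) = 1 then 2 else 0)
        clear hm; revert ℓ; decide
  exact absurd (transGen_lt _ hstrict hv) (lt_irrefl _)

def fdA (S : Finset (Fin 8)) (hS : S.card ≤ 3) : IsFloorDiagram (stdA S hS) 0 4 where
  conn := stdA_conn
  acyclic := stdA_acyclic
  betti := rfl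
  div_floor := by
    intro v hv
    rcases (stdA_not_infVert_iff v).1 hv with rfl | rfl
    · exact Or.inr stdA_div_0
    · exact Or.inr stdA_div_1
  div_inf := by
    intro v hv
    rcases vcaseA v with rfl | rfl | ⟨ℓ, rfl⟩
    · exact absurd hv stdA_not_infVert_0
    · exact absurd hv stdA_not_infVert_1
    · rw [stdA_div_lab]
  sink_of_two := by
    intro v hv h2
    rcases (stdA_not_infVert_iff v).1 hv with rfl | rfl
    · rw [stdA_div_0] at h2; norm_num at h2
    · rw [stdA_div_1] at h2; norm_num at h2
  total_div := stdA_total_div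

lemma ρA_strict : ∀ x y, (stdA S hS).veStep x y → ρA x < ρA y := by
  intro x y h
  cases x with
  | inl u =>
    cases y with
    | inl _ => exact h.elim
    | inr e =>
      have hs : (stdA S hS).src e = u := h
      clear h
      rcases ecaseA e with rfl | ⟨ℓ, rfl⟩
      · rw [stdA_src0] at hs; subst hs
        show ρA (Sum.inl (0 : Fin 10)) < ρA (Sum.inr (0 : Fin 9)); decide
      · rw [stdA_srcs] at hs; subst hs
        show ρA (Sum.inl (labA ℓ)) < ρA (Sum.inr ℓ.succ)
        revert ℓ; decide
  | inr e =>
    cases y with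
    | inr _ => exact h.elim
    | inl v =>
      have ht : (stdA S hS).tgt e = v := h
      clear h
      rcases ecaseA e with rfl | ⟨ℓ, rfl⟩
      · rw [stdA_tgt0] at ht; subst ht
        show ρA (Sum.inr (0 : Fin 9)) < ρA (Sum.inl (1 : Fin 10)); decide
      · rw [stdA_tgts] at ht
        by_cases hm : ℓ ∈ S
        · rw [if_pos hm] at ht; subst ht
          show ρA (Sum.inr ℓ.succ) < ρA (Sum.inl (1 : Fin 10))
          clear hm; revert ℓ; decide
        · rw [if_neg hm] at ht; subst ht
          show ρA (Sum.inr ℓ.succ) < ρA (Sum.inl (0 : Fin 10))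
          clear hm; revert ℓ; decide

def markA (S : Finset (Fin 8)) (hS : S.card ≤ 3) :
    IsMarking 6 0 4 (fun _ => 1) [1, 1] [] (stdA S hS) mA where
  inj := mA_inj
  incr := by
    intro i j hT
    have hlt := transGen_lt ρA (ρA_strict (S := S) (hS := hS)) hT
    by_contra hij
    exact absurd hlt (not_lt.2 (ρA_mono i j hij))
  no_floor_one := by
    intro v hv h2
    rcases (stdA_not_infVert_iff v).1 hv with rfl | rfl
    · rw [stdA_div_0] at h2; norm_num at h2
    · rw [stdA_div_1] at h2; norm_num at h2
  inf_pair := by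
    intro v hv e hadj
    rcases vcaseA v with rfl | rfl | ⟨ℓ, rfl⟩
    · exact absurd hv stdA_not_infVert_0
    · exact absurd hv stdA_not_infVert_1
    · have he : e = ℓ.succ := stdA_adj_lab hadj
      subst he
      exact Or.inl ⟨mA_lab_exists ℓ, fun ⟨p, hp⟩ => mA_no_inf_edge p ℓ hp⟩
  exc_vert := by
    intro i p
    exact ⟨labA (labIdx i), stdA_infVert_lab _, rfl⟩
  mu1_vert := by
    intro i
    fin_cases i
    · exact ⟨fun _ => by norm_num, fun _ => ⟨labA 0, stdA_infVert_lab _, rfl⟩⟩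
    · exact ⟨fun _ => by norm_num, fun _ => ⟨labA 1, stdA_infVert_lab _, rfl⟩⟩
    · refine ⟨fun ⟨v, hv, hm⟩ => ?_, fun h => absurd h (by norm_num)⟩
      obtain rfl : (0 : Fin 10) = v := Sum.inl.inj hm
      exact absurd hv stdA_not_infVert_0
    · refine ⟨fun ⟨v, hv, hm⟩ => ?_, fun h => absurd h (by norm_num)⟩
      exact (Sum.inr_ne_inl hm).elim
    · refine ⟨fun ⟨v, hv, hm⟩ => ?_, fun h => absurd h (by norm_num)⟩
      obtain rfl : (1 : Fin 10) = v := Sum.inl.inj hm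
      exact absurd hv stdA_not_infVert_1
  floor_once := by
    intro i v hv e e' he he' h1 h2
    obtain ⟨p, u, hm, hu⟩ := h1
    obtain ⟨p', u', hm', hu'⟩ := h2
    obtain rfl : labA (labIdx i) = u := Sum.inl.inj hm
    obtain rfl : labA (labIdx i) = u' := Sum.inl.inj hm'
    rw [stdA_adj_lab hu, stdA_adj_lab hu']
  mu1_weight := by
    intro i h v e hm hadj
    fin_cases i
    · obtain rfl : labA 0 = v := Sum.inl.inj hm
      rw [stdA_adj_lab hadj, stdA_ws]
      rfl
    · obtain rfl : labA 1 = v := Sum.inl.inj hm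
      rw [stdA_adj_lab hadj, stdA_ws]
      rfl
    · exact absurd h (by norm_num)
    · exact absurd h (by norm_num)
    · exact absurd h (by norm_num)
  mu2_edges := by
    have hempty : (Finset.univ.filter fun e : Fin 9 =>
        (stdA S hS).InfEdge e ∧ ∃ i : Fin 5, mA (Sum.inl i) = Sum.inr e) = ∅ := by
      rw [Finset.filter_eq_empty_iff]
      rintro e _ ⟨hinf, i, hi⟩
      rcases ecaseA e with rfl | ⟨ℓ, rfl⟩
      · obtain ⟨v, hadj, hv⟩ := hinf
        rcases hadj with h | h
        · rw [stdA_src0] at h; subst h; exact stdA_not_infVert_0 hv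
        · rw [stdA_tgt0] at h; subst h; exact stdA_not_infVert_1 hv
      · exact mA_no_inf_edge _ ℓ hi
    have hfin : Multiset.map (stdA S hS).w ((Finset.univ.filter fun e : Fin 9 =>
        (stdA S hS).InfEdge e ∧ ∃ i : Fin 5, mA (Sum.inl i) = Sum.inr e).val)
        = (↑([] : List ℕ) : Multiset ℕ) := by
      rw [hempty]; rfl
    exact hfin

@[reducible] def repA (S : Finset (Fin 8)) (hS : S.card ≤ 3) : MarkedFD 6 0 4 (fun _ => 1) [1, 1] [] where
  G := stdA S hS
  m := mA
  fd := fdA S hS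
  marking := markA S hS

end FD4
end StdA2

noncomputable section StdB
namespace FD4
open WOGraph

abbrev labB (ℓ : Fin 8) : Fin 11 := ℓ.succ.succ.succ

lemma labB_inj : Function.Injective labB := by decide

@[reducible] def stdB (S1 S2 : Finset (Fin 8)) (h1 : S1.card ≤ 1) (h2 : S2.card ≤ 1)
    (hd : Disjoint S1 S2) : WOGraph where
  nV := 11
  nE := 10
  src := Fin.cons 0 (Fin.cons 0 fun ℓ => labB ℓ)
  tgt := Fin.cons 1 (Fin.cons 2 fun ℓ =>
    if ℓ ∈ S1 then 1 else if ℓ ∈ S2 then 2 else 0)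
  w := Fin.cons (2 - S1.card) (Fin.cons (2 - S2.card) fun _ => 1)
  w_pos := by
    intro e
    refine Fin.cases ?_ (fun e' => ?_) e
    · simp only [Fin.cons_zero]; omega
    · refine Fin.cases ?_ (fun ℓ => ?_) e'
      · simp only [Fin.cons_succ, Fin.cons_zero]; omega
      · simp

def mB0 (i : Fin 5) : (Fin 11) ⊕ (Fin 10) :=
  if i.val = 0 then Sum.inl (labB 0)
  else if i.val = 1 then Sum.inl (labB 1)
  else if i.val = 2 then Sum.inl 0
  else if i.val = 3 then Sum.inr 0
  else Sum.inr 1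

def mB : (Fin 5 ⊕ (Σ _ : Fin 6, Fin 1)) → (Fin 11) ⊕ (Fin 10) :=
  Sum.elim mB0 (fun q => Sum.inl (labB (labIdx q.1)))

lemma mB_inj : Function.Injective mB := by decide
lemma mB_lab_exists : ∀ ℓ : Fin 8, ∃ p, mB p = Sum.inl (labB ℓ) := by decide
lemma mB_no_inf_edge : ∀ p, ∀ ℓ : Fin 8, mB p ≠ Sum.inr ℓ.succ.succ := by decide

def ρB : (Fin 11) ⊕ (Fin 10) → ℕ
  | Sum.inl v => if v = 0 then 2 else if v = 1 then 4 else if v = 2 then 4 else 0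
  | Sum.inr e => if e = 0 then 3 else if e = 1 then 3 else 1

lemma ρB_mono : ∀ i j : Fin 5, ¬ i < j → ρB (mB (Sum.inl j)) ≤ ρB (mB (Sum.inl i)) := by
  decide

variable {S1 S2 : Finset (Fin 8)} {h1 : S1.card ≤ 1} {h2 : S2.card ≤ 1}
  {hd : Disjoint S1 S2}

lemma stdB_src0 : (stdB S1 S2 h1 h2 hd).src (0 : Fin 10) = (0 : Fin 11) := rfl
lemma stdB_src1 : (stdB S1 S2 h1 h2 hd).src (1 : Fin 10) = (0 : Fin 11) := rfl
lemma stdB_tgt0 : (stdB S1 S2 h1 h2 hd).tgt (0 : Fin 10) = (1 : Fin 11) := rfl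
lemma stdB_tgt1 : (stdB S1 S2 h1 h2 hd).tgt (1 : Fin 10) = (2 : Fin 11) := rfl
lemma stdB_w0 : (stdB S1 S2 h1 h2 hd).w (0 : Fin 10) = 2 - S1.card := rfl
lemma stdB_w1 : (stdB S1 S2 h1 h2 hd).w (1 : Fin 10) = 2 - S2.card := rfl
lemma stdB_srcs (ℓ : Fin 8) : (stdB S1 S2 h1 h2 hd).src (ℓ.succ.succ : Fin 10) = labB ℓ := rfl
lemma stdB_tgts (ℓ : Fin 8) : (stdB S1 S2 h1 h2 hd).tgt (ℓ.succ.succ : Fin 10) =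
    (if ℓ ∈ S1 then (1 : Fin 11) else if ℓ ∈ S2 then (2 : Fin 11) else (0 : Fin 11)) := rfl
lemma stdB_ws (ℓ : Fin 8) : (stdB S1 S2 h1 h2 hd).w (ℓ.succ.succ : Fin 10) = 1 := rfl

lemma vcaseB : ∀ v : Fin 11, v = 0 ∨ v = 1 ∨ v = 2 ∨ ∃ ℓ : Fin 8, v = labB ℓ := by decide
lemma ecaseB : ∀ e : Fin 10, e = 0 ∨ e = 1 ∨ ∃ ℓ : Fin 8, e = ℓ.succ.succ := by decide

lemma stdB_tgt_val_le (e : Fin 10) : ((stdB S1 S2 h1 h2 hd).tgt e).val ≤ 2 := by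
  rcases ecaseB e with rfl | rfl | ⟨ℓ, rfl⟩
  · rw [stdB_tgt0]; exact le_of_eq rfl |>.trans (by norm_num)
  · rw [stdB_tgt1]; exact le_refl _
  · rw [stdB_tgts]; split
    · exact (by norm_num : (1:ℕ) ≤ 2)
    · split
      · exact le_refl _
      · exact (by norm_num : (0:ℕ) ≤ 2)

lemma stdB_tgt_ne_lab (e : Fin 10) (ℓ : Fin 8) : (stdB S1 S2 h1 h2 hd).tgt e ≠ labB ℓ := by
  intro h
  have hv := stdB_tgt_val_le (S1 := S1) (S2 := S2) (h1 := h1) (h2 := h2) (hd := hd) e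
  rw [h] at hv
  simp [labB, Fin.val_succ] at hv

lemma stdB_src_eq_lab {e : Fin 10} {ℓ : Fin 8} (h : (stdB S1 S2 h1 h2 hd).src e = labB ℓ) :
    e = ℓ.succ.succ := by
  rcases ecaseB e with rfl | rfl | ⟨ℓ', rfl⟩
  · rw [stdB_src0] at h; exact absurd (congrArg Fin.val h) (by simp [labB])
  · rw [stdB_src1] at h; exact absurd (congrArg Fin.val h) (by simp [labB])
  · rw [stdB_srcs] at h
    rw [labB_inj h]

lemma stdB_adj_lab {e : Fin 10} {ℓ : Fin 8} (h : (stdB S1 S2 h1 h2 hd).Adj e (labB ℓ)) :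
    e = ℓ.succ.succ := by
  rcases h with h | h
  · exact stdB_src_eq_lab h
  · exact absurd h (stdB_tgt_ne_lab e ℓ)

lemma stdB_filter_src_lab (ℓ : Fin 8) :
    (Finset.univ.filter fun e => (stdB S1 S2 h1 h2 hd).src e = labB ℓ)
      = ({ℓ.succ.succ} : Finset (Fin 10)) := by
  ext e
  simp only [Finset.mem_filter, Finset.mem_univ, true_and, Finset.mem_singleton]
  constructor
  · exact stdB_src_eq_lab (S1 := S1) (S2 := S2) (h1 := h1) (h2 := h2) (hd := hd)
  · rintro rfl; exact stdB_srcs (S1 := S1) (S2 := S2) (h1 := h1) (h2 := h2) (hd := hd) ℓ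

lemma stdB_filter_tgt_lab (ℓ : Fin 8) :
    (Finset.univ.filter fun e => (stdB S1 S2 h1 h2 hd).tgt e = labB ℓ)
      = (∅ : Finset (Fin 10)) := by
  rw [Finset.filter_eq_empty_iff]
  intro e _
  exact stdB_tgt_ne_lab e ℓ

lemma stdB_div_lab (ℓ : Fin 8) : (stdB S1 S2 h1 h2 hd).div (labB ℓ) = -1 := by
  unfold WOGraph.div
  rw [stdB_filter_src_lab, stdB_filter_tgt_lab]
  rw [Finset.sum_empty, Finset.sum_singleton, stdB_ws]
  simp

lemma stdB_infVert_lab (ℓ : Fin 8) : (stdB S1 S2 h1 h2 hd).InfVert (labB ℓ) := by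
  constructor
  · show (stdB S1 S2 h1 h2 hd).degree (labB ℓ) = 1
    unfold WOGraph.degree
    rw [stdB_filter_src_lab, stdB_filter_tgt_lab]
    simp
  · intro e h
    rcases h with h | h
    · exact h
    · exact absurd h (stdB_tgt_ne_lab e ℓ)

lemma stdB_not_infVert_0 : ¬ (stdB S1 S2 h1 h2 hd).InfVert (0 : Fin 11) := by
  intro h
  have hex : ∃ ℓ : Fin 8, ℓ ∉ S1 ∧ ℓ ∉ S2 := by
    by_contra hc
    push_neg at hc
    have hsub : (Finset.univ : Finset (Fin 8)) ⊆ S1 ∪ S2 := by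
      intro ℓ _
      rcases Classical.em (ℓ ∈ S1) with h' | h'
      · exact Finset.mem_union_left _ h'
      · exact Finset.mem_union_right _ (hc ℓ h')
    have := Finset.card_le_card hsub
    rw [Finset.card_union_of_disjoint hd] at this
    simp at this
    omega
  obtain ⟨ℓ, hℓ1, hℓ2⟩ := hex
  have hadj : (stdB S1 S2 h1 h2 hd).Adj (ℓ.succ.succ : Fin 10) (0 : Fin 11) := by
    right
    rw [stdB_tgts]
    simp [hℓ1, hℓ2]
  have hsrc := h.2 _ hadj
  rw [stdB_srcs] at hsrc
  exact absurd (congrArg Fin.val hsrc) (by simp [labB])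

lemma stdB_not_infVert_1 : ¬ (stdB S1 S2 h1 h2 hd).InfVert (1 : Fin 11) := by
  intro h
  have hadj : (stdB S1 S2 h1 h2 hd).Adj (0 : Fin 10) (1 : Fin 11) := Or.inr stdB_tgt0
  have hsrc := h.2 _ hadj
  rw [stdB_src0] at hsrc
  exact absurd (congrArg Fin.val hsrc) (by simp)

lemma stdB_not_infVert_2 : ¬ (stdB S1 S2 h1 h2 hd).InfVert (2 : Fin 11) := by
  intro h
  have hadj : (stdB S1 S2 h1 h2 hd).Adj (1 : Fin 10) (2 : Fin 11) := Or.inr stdB_tgt1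
  have hsrc := h.2 _ hadj
  rw [stdB_src1] at hsrc
  exact absurd (congrArg Fin.val hsrc) (by simp)

lemma stdB_not_infVert_iff (v : Fin 11) :
    ¬ (stdB S1 S2 h1 h2 hd).InfVert v ↔ (v = 0 ∨ v = 1 ∨ v = 2) := by
  constructor
  · intro h
    rcases vcaseB v with rfl | rfl | rfl | ⟨ℓ, rfl⟩
    · exact Or.inl rfl
    · exact Or.inr (Or.inl rfl)
    · exact Or.inr (Or.inr rfl)
    · exact absurd (stdB_infVert_lab ℓ) h
  · rintro (rfl | rfl | rfl)
    · exact stdB_not_infVert_0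
    · exact stdB_not_infVert_1
    · exact stdB_not_infVert_2

lemma sum10 (f : Fin 10 → ℤ) :
    ∑ e, f e = f 0 + (f 1 + ∑ ℓ : Fin 8, f ℓ.succ.succ) := by
  rw [Fin.sum_univ_succ, Fin.sum_univ_succ]
  rfl

lemma stdB_div_eq (v : Fin 11) : (stdB S1 S2 h1 h2 hd).div v =
    (∑ e : Fin 10, if (stdB S1 S2 h1 h2 hd).tgt e = v
      then ((stdB S1 S2 h1 h2 hd).w e : ℤ) else 0) -
    (∑ e : Fin 10, if (stdB S1 S2 h1 h2 hd).src e = v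
      then ((stdB S1 S2 h1 h2 hd).w e : ℤ) else 0) := by
  unfold WOGraph.div
  rw [Finset.sum_filter, Finset.sum_filter]
  try rfl

lemma stdB_div_0 : (stdB S1 S2 h1 h2 hd).div (0 : Fin 11) = 4 := by
  rw [stdB_div_eq, sum10, sum10]
  have ht : ∀ ℓ : Fin 8, (if (stdB S1 S2 h1 h2 hd).tgt ℓ.succ.succ = (0 : Fin 11)
      then ((stdB S1 S2 h1 h2 hd).w ℓ.succ.succ : ℤ) else 0)
      = if ℓ ∉ S1 ∪ S2 then 1 else 0 := by
    intro ℓ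
    rw [stdB_tgts, stdB_ws]
    by_cases ha : ℓ ∈ S1
    · simp [ha, Fin.ext_iff]
    · by_cases hb : ℓ ∈ S2 <;> simp [ha, hb, Fin.ext_iff]
  have hs : ∀ ℓ : Fin 8, (if (stdB S1 S2 h1 h2 hd).src ℓ.succ.succ = (0 : Fin 11)
      then ((stdB S1 S2 h1 h2 hd).w ℓ.succ.succ : ℤ) else 0) = 0 := by
    intro ℓ
    rw [stdB_srcs]
    have : labB ℓ ≠ (0 : Fin 11) := by have := (show ∀ m : Fin 8, labB m ≠ (0 : Fin 11) by decide); exact this ℓ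
    simp [this]
  rw [Finset.sum_congr rfl (fun ℓ _ => ht ℓ), Finset.sum_congr rfl (fun ℓ _ => hs ℓ)]
  rw [Finset.sum_boole]
  have hcomp : (Finset.univ.filter fun ℓ : Fin 8 => ℓ ∉ S1 ∪ S2).card
      = 8 - (S1.card + S2.card) := by
    rw [card_compl_filter (S1 ∪ S2), Finset.card_union_of_disjoint hd]
  rw [hcomp]
  have hc1 : ¬ ((stdB S1 S2 h1 h2 hd).tgt (0 : Fin 10) = (0 : Fin 11)) := by
    rw [stdB_tgt0]; show (1 : Fin 11) ≠ (0 : Fin 11); decide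
  have hc2 : ¬ ((stdB S1 S2 h1 h2 hd).tgt (1 : Fin 10) = (0 : Fin 11)) := by
    rw [stdB_tgt1]; show (2 : Fin 11) ≠ (0 : Fin 11); decide
  have hc3 : (stdB S1 S2 h1 h2 hd).src (0 : Fin 10) = (0 : Fin 11) := stdB_src0
  have hc4 : (stdB S1 S2 h1 h2 hd).src (1 : Fin 10) = (0 : Fin 11) := stdB_src1
  rw [if_neg hc1, if_neg hc2, if_pos hc3, if_pos hc4, stdB_w0, stdB_w1]
  simp only [Finset.sum_const_zero, add_zero, zero_add]
  have hb1 := Finset.card_le_card (Finset.subset_union_left (s₁ := S1) (s₂ := S2))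
  omega

lemma stdB_div_1 : (stdB S1 S2 h1 h2 hd).div (1 : Fin 11) = 2 := by
  rw [stdB_div_eq, sum10, sum10]
  have ht : ∀ ℓ : Fin 8, (if (stdB S1 S2 h1 h2 hd).tgt ℓ.succ.succ = (1 : Fin 11)
      then ((stdB S1 S2 h1 h2 hd).w ℓ.succ.succ : ℤ) else 0)
      = if ℓ ∈ S1 then 1 else 0 := by
    intro ℓ
    rw [stdB_tgts, stdB_ws]
    by_cases ha : ℓ ∈ S1
    · simp [ha]
    · by_cases hb : ℓ ∈ S2 <;> simp [ha, hb, Fin.ext_iff]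
  have hs : ∀ ℓ : Fin 8, (if (stdB S1 S2 h1 h2 hd).src ℓ.succ.succ = (1 : Fin 11)
      then ((stdB S1 S2 h1 h2 hd).w ℓ.succ.succ : ℤ) else 0) = 0 := by
    intro ℓ
    rw [stdB_srcs]
    have : labB ℓ ≠ (1 : Fin 11) := by have := (show ∀ m : Fin 8, labB m ≠ (1 : Fin 11) by decide); exact this ℓ
    simp [this]
  rw [Finset.sum_congr rfl (fun ℓ _ => ht ℓ), Finset.sum_congr rfl (fun ℓ _ => hs ℓ)]
  rw [Finset.sum_boole]
  have hfS : (Finset.univ.filter fun ℓ : Fin 8 => ℓ ∈ S1).card = S1.card := by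
    congr 1; ext ℓ; simp
  rw [hfS]
  have hc1 : (stdB S1 S2 h1 h2 hd).tgt (0 : Fin 10) = (1 : Fin 11) := stdB_tgt0
  have hc2 : ¬ ((stdB S1 S2 h1 h2 hd).tgt (1 : Fin 10) = (1 : Fin 11)) := by
    rw [stdB_tgt1]; show (2 : Fin 11) ≠ (1 : Fin 11); decide
  have hc3 : ¬ ((stdB S1 S2 h1 h2 hd).src (0 : Fin 10) = (1 : Fin 11)) := by
    rw [stdB_src0]; show (0 : Fin 11) ≠ (1 : Fin 11); decide
  have hc4 : ¬ ((stdB S1 S2 h1 h2 hd).src (1 : Fin 10) = (1 : Fin 11)) := by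
    rw [stdB_src1]; show (0 : Fin 11) ≠ (1 : Fin 11); decide
  rw [if_pos hc1, if_neg hc2, if_neg hc3, if_neg hc4, stdB_w0]
  simp only [Finset.sum_const_zero, add_zero, zero_add]
  omega

lemma stdB_div_2 : (stdB S1 S2 h1 h2 hd).div (2 : Fin 11) = 2 := by
  rw [stdB_div_eq, sum10, sum10]
  have ht : ∀ ℓ : Fin 8, (if (stdB S1 S2 h1 h2 hd).tgt ℓ.succ.succ = (2 : Fin 11)
      then ((stdB S1 S2 h1 h2 hd).w ℓ.succ.succ : ℤ) else 0)
      = if ℓ ∈ S2 then 1 else 0 := by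
    intro ℓ
    rw [stdB_tgts, stdB_ws]
    by_cases ha : ℓ ∈ S1
    · have : ℓ ∉ S2 := fun hb => (Finset.disjoint_left.1 hd) ha hb
      simp [ha, this, Fin.ext_iff]
    · by_cases hb : ℓ ∈ S2 <;> simp [ha, hb, Fin.ext_iff]
  have hs : ∀ ℓ : Fin 8, (if (stdB S1 S2 h1 h2 hd).src ℓ.succ.succ = (2 : Fin 11)
      then ((stdB S1 S2 h1 h2 hd).w ℓ.succ.succ : ℤ) else 0) = 0 := by
    intro ℓ
    rw [stdB_srcs]
    have : labB ℓ ≠ (2 : Fin 11) := by simp [labB, Fin.ext_iff]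
    simp [this]
  rw [Finset.sum_congr rfl (fun ℓ _ => ht ℓ), Finset.sum_congr rfl (fun ℓ _ => hs ℓ)]
  rw [Finset.sum_boole]
  have hfS : (Finset.univ.filter fun ℓ : Fin 8 => ℓ ∈ S2).card = S2.card := by
    congr 1; ext ℓ; simp
  rw [hfS]
  have hc1 : ¬ ((stdB S1 S2 h1 h2 hd).tgt (0 : Fin 10) = (2 : Fin 11)) := by
    rw [stdB_tgt0]; show (1 : Fin 11) ≠ (2 : Fin 11); decide
  have hc2 : (stdB S1 S2 h1 h2 hd).tgt (1 : Fin 10) = (2 : Fin 11) := stdB_tgt1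
  have hc3 : ¬ ((stdB S1 S2 h1 h2 hd).src (0 : Fin 10) = (2 : Fin 11)) := by
    rw [stdB_src0]; show (0 : Fin 11) ≠ (2 : Fin 11); decide
  have hc4 : ¬ ((stdB S1 S2 h1 h2 hd).src (1 : Fin 10) = (2 : Fin 11)) := by
    rw [stdB_src1]; show (0 : Fin 11) ≠ (2 : Fin 11); decide
  rw [if_neg hc1, if_pos hc2, if_neg hc3, if_neg hc4, stdB_w1]
  simp only [Finset.sum_const_zero, add_zero, zero_add]
  omega

end FD4
end StdB

noncomputable section StdB2
namespace FD4
open WOGraph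

variable {S1 S2 : Finset (Fin 8)} {h1 : S1.card ≤ 1} {h2 : S2.card ≤ 1}
  {hd : Disjoint S1 S2}

lemma stdB_filter_infVert :
    (Finset.univ.filter fun v : Fin 11 => (stdB S1 S2 h1 h2 hd).InfVert v)
      = Finset.univ.image labB := by
  ext v
  simp only [Finset.mem_filter, Finset.mem_univ, true_and, Finset.mem_image]
  constructor
  · intro hv
    rcases vcaseB v with rfl | rfl | rfl | ⟨ℓ, rfl⟩
    · exact absurd hv stdB_not_infVert_0
    · exact absurd hv stdB_not_infVert_1
    · exact absurd hv stdB_not_infVert_2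
    · exact ⟨ℓ, rfl⟩
  · rintro ⟨ℓ, -, rfl⟩; exact stdB_infVert_lab ℓ

lemma stdB_total_div :
    (∑ v ∈ Finset.univ.filter (fun v : Fin 11 => (stdB S1 S2 h1 h2 hd).InfVert v),
      (stdB S1 S2 h1 h2 hd).div v) = -(2 * (4 : ℤ)) := by
  rw [stdB_filter_infVert, Finset.sum_image (fun x _ y _ h => labB_inj h)]
  rw [Finset.sum_congr rfl (fun ℓ _ => stdB_div_lab ℓ)]
  simp

lemma stdB_conn : (stdB S1 S2 h1 h2 hd).Connected := by
  refine ⟨by norm_num, ?_⟩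
  have hsymm : Symmetric (stdB S1 S2 h1 h2 hd).connStep := by
    rintro u v ⟨e, h⟩; exact ⟨e, h.symm⟩
  have h0 : ∀ v : Fin 11,
      Relation.ReflTransGen (stdB S1 S2 h1 h2 hd).connStep v (0 : Fin 11) := by
    intro v
    have e0 : (stdB S1 S2 h1 h2 hd).connStep (1 : Fin 11) (0 : Fin 11) :=
      ⟨(0 : Fin 10), Or.inr ⟨stdB_src0, stdB_tgt0⟩⟩
    have e1 : (stdB S1 S2 h1 h2 hd).connStep (2 : Fin 11) (0 : Fin 11) :=
      ⟨(1 : Fin 10), Or.inr ⟨stdB_src1, stdB_tgt1⟩⟩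
    rcases vcaseB v with rfl | rfl | rfl | ⟨ℓ, rfl⟩
    · exact Relation.ReflTransGen.refl
    · exact Relation.ReflTransGen.single e0
    · exact Relation.ReflTransGen.single e1
    · have step1 : (stdB S1 S2 h1 h2 hd).connStep (labB ℓ)
          ((stdB S1 S2 h1 h2 hd).tgt ℓ.succ.succ) :=
        ⟨(ℓ.succ.succ : Fin 10), Or.inl ⟨stdB_srcs ℓ, rfl⟩⟩
      have step2 : Relation.ReflTransGen (stdB S1 S2 h1 h2 hd).connStep
          ((stdB S1 S2 h1 h2 hd).tgt ℓ.succ.succ) (0 : Fin 11) := by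
        rw [stdB_tgts]
        split
        · exact Relation.ReflTransGen.single e0
        · split
          · exact Relation.ReflTransGen.single e1
          · exact Relation.ReflTransGen.refl
      exact Relation.ReflTransGen.head step1 step2
  intro u v
  exact (h0 u).trans (by haveI : Std.Symm (stdB S1 S2 h1 h2 hd).connStep := ⟨fun _ _ h => hsymm h⟩; exact Std.Symm.symm _ _ (h0 v))

lemma stdB_acyclic : (stdB S1 S2 h1 h2 hd).Acyclic := by
  intro v hv
  have hstrict : ∀ x y : Fin 11, (stdB S1 S2 h1 h2 hd).dirStep x y →
      (fun x : Fin 11 => if x = 0 then 1 else if x = 1 then 2 else if x = 2 then 2 else 0) x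
        < (fun x : Fin 11 => if x = 0 then 1 else if x = 1 then 2 else if x = 2 then 2 else 0) y := by
    rintro x y ⟨e, hs, ht⟩
    rcases ecaseB e with rfl | rfl | ⟨ℓ, rfl⟩
    · rw [stdB_src0] at hs; rw [stdB_tgt0] at ht
      subst hs; subst ht
      show (if (0:Fin 11) = 0 then 1 else if (0:Fin 11) = 1 then 2 else if (0:Fin 11) = 2 then 2 else 0)
        < (if (1:Fin 11) = 0 then 1 else if (1:Fin 11) = 1 then 2 else if (1:Fin 11) = 2 then 2 else 0)
      decide
    · rw [stdB_src1] at hs; rw [stdB_tgt1] at ht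
      subst hs; subst ht
      show (if (0:Fin 11) = 0 then 1 else if (0:Fin 11) = 1 then 2 else if (0:Fin 11) = 2 then 2 else 0)
        < (if (2:Fin 11) = 0 then 1 else if (2:Fin 11) = 1 then 2 else if (2:Fin 11) = 2 then 2 else 0)
      decide
    · rw [stdB_srcs] at hs; rw [stdB_tgts] at ht
      subst hs
      by_cases ha : ℓ ∈ S1
      · rw [if_pos ha] at ht; subst ht
        show (if labB ℓ = 0 then 1 else if labB ℓ = 1 then 2 else if labB ℓ = 2 then 2 else 0)
          < (if (1:Fin 11) = 0 then 1 else if (1:Fin 11) = 1 then 2 else if (1:Fin 11) = 2 then 2 else 0)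
        clear ha; revert ℓ; decide
      · rw [if_neg ha] at ht
        by_cases hb : ℓ ∈ S2
        · rw [if_pos hb] at ht; subst ht
          show (if labB ℓ = 0 then 1 else if labB ℓ = 1 then 2 else if labB ℓ = 2 then 2 else 0)
            < (if (2:Fin 11) = 0 then 1 else if (2:Fin 11) = 1 then 2 else if (2:Fin 11) = 2 then 2 else 0)
          clear ha hb; revert ℓ; decide
        · rw [if_neg hb] at ht; subst ht
          show (if labB ℓ = 0 then 1 else if labB ℓ = 1 then 2 else if labB ℓ = 2 then 2 else 0)
            < (if (0:Fin 11) = 0 then 1 else if (0:Fin 11) = 1 then 2 else if (0:Fin 11) = 2 then 2 else 0)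
          clear ha hb; revert ℓ; decide
  exact absurd (transGen_lt _ hstrict hv) (lt_irrefl _)

def fdB (S1 S2 : Finset (Fin 8)) (h1 : S1.card ≤ 1) (h2 : S2.card ≤ 1)
    (hd : Disjoint S1 S2) : IsFloorDiagram (stdB S1 S2 h1 h2 hd) 0 4 where
  conn := stdB_conn
  acyclic := stdB_acyclic
  betti := rfl
  div_floor := by
    intro v hv
    rcases (stdB_not_infVert_iff v).1 hv with rfl | rfl | rfl
    · exact Or.inr stdB_div_0
    · exact Or.inl stdB_div_1
    · exact Or.inl stdB_div_2
  div_inf := by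
    intro v hv
    rcases vcaseB v with rfl | rfl | rfl | ⟨ℓ, rfl⟩
    · exact absurd hv stdB_not_infVert_0
    · exact absurd hv stdB_not_infVert_1
    · exact absurd hv stdB_not_infVert_2
    · rw [stdB_div_lab]
  sink_of_two := by
    intro v hv hv2 e hadj
    rcases (stdB_not_infVert_iff v).1 hv with rfl | rfl | rfl
    · rw [stdB_div_0] at hv2; norm_num at hv2
    · -- v = 1 : all adjacent edges point to 1
      rcases ecaseB e with rfl | rfl | ⟨ℓ, rfl⟩
      · exact stdB_tgt0
      · rcases hadj with h | h
        · rw [stdB_src1] at h; exact absurd (congrArg Fin.val h) (by simp)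
        · exact h
      · rcases hadj with h | h
        · rw [stdB_srcs] at h; exact absurd (congrArg Fin.val h) (by simp [labB])
        · exact h
    · rcases ecaseB e with rfl | rfl | ⟨ℓ, rfl⟩
      · rcases hadj with h | h
        · rw [stdB_src0] at h; exact absurd (congrArg Fin.val h) (by simp)
        · rw [stdB_tgt0] at h; exact absurd (congrArg Fin.val h) (by simp)
      · exact stdB_tgt1
      · rcases hadj with h | h
        · rw [stdB_srcs] at h; exact absurd (congrArg Fin.val h) (by simp [labB])
        · exact h
  total_div := stdB_total_div

lemma ρB_strict : ∀ x y, (stdB S1 S2 h1 h2 hd).veStep x y → ρB x < ρB y := by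
  intro x y h
  cases x with
  | inl u =>
    cases y with
    | inl _ => exact h.elim
    | inr e =>
      have hs : (stdB S1 S2 h1 h2 hd).src e = u := h
      clear h
      rcases ecaseB e with rfl | rfl | ⟨ℓ, rfl⟩
      · rw [stdB_src0] at hs; subst hs
        show ρB (Sum.inl (0 : Fin 11)) < ρB (Sum.inr (0 : Fin 10)); decide
      · rw [stdB_src1] at hs; subst hs
        show ρB (Sum.inl (0 : Fin 11)) < ρB (Sum.inr (1 : Fin 10)); decide
      · rw [stdB_srcs] at hs; subst hs
        show ρB (Sum.inl (labB ℓ)) < ρB (Sum.inr ℓ.succ.succ)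
        revert ℓ; decide
  | inr e =>
    cases y with
    | inr _ => exact h.elim
    | inl v =>
      have ht : (stdB S1 S2 h1 h2 hd).tgt e = v := h
      clear h
      rcases ecaseB e with rfl | rfl | ⟨ℓ, rfl⟩
      · rw [stdB_tgt0] at ht; subst ht
        show ρB (Sum.inr (0 : Fin 10)) < ρB (Sum.inl (1 : Fin 11)); decide
      · rw [stdB_tgt1] at ht; subst ht
        show ρB (Sum.inr (1 : Fin 10)) < ρB (Sum.inl (2 : Fin 11)); decide
      · rw [stdB_tgts] at ht
        by_cases ha : ℓ ∈ S1
        · rw [if_pos ha] at ht; subst ht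
          show ρB (Sum.inr ℓ.succ.succ) < ρB (Sum.inl (1 : Fin 11))
          clear ha; revert ℓ; decide
        · rw [if_neg ha] at ht
          by_cases hb : ℓ ∈ S2
          · rw [if_pos hb] at ht; subst ht
            show ρB (Sum.inr ℓ.succ.succ) < ρB (Sum.inl (2 : Fin 11))
            clear ha hb; revert ℓ; decide
          · rw [if_neg hb] at ht; subst ht
            show ρB (Sum.inr ℓ.succ.succ) < ρB (Sum.inl (0 : Fin 11))
            clear ha hb; revert ℓ; decide

def markB (S1 S2 : Finset (Fin 8)) (h1 : S1.card ≤ 1) (h2 : S2.card ≤ 1)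
    (hd : Disjoint S1 S2) :
    IsMarking 6 0 4 (fun _ => 1) [1, 1] [] (stdB S1 S2 h1 h2 hd) mB where
  inj := mB_inj
  incr := by
    intro i j hT
    have hlt := transGen_lt ρB
      (ρB_strict (S1 := S1) (S2 := S2) (h1 := h1) (h2 := h2) (hd := hd)) hT
    by_contra hij
    exact absurd hlt (not_lt.2 (ρB_mono i j hij))
  no_floor_one := by
    intro v hv hv2 p hp
    rcases (stdB_not_infVert_iff v).1 hv with rfl | rfl | rfl
    · rw [stdB_div_0] at hv2; norm_num at hv2
    · revert hp
      have : ∀ p, mB p ≠ Sum.inl (1 : Fin 11) := by decide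
      exact this p
    · revert hp
      have : ∀ p, mB p ≠ Sum.inl (2 : Fin 11) := by decide
      exact this p
  inf_pair := by
    intro v hv e hadj
    rcases vcaseB v with rfl | rfl | rfl | ⟨ℓ, rfl⟩
    · exact absurd hv stdB_not_infVert_0
    · exact absurd hv stdB_not_infVert_1
    · exact absurd hv stdB_not_infVert_2
    · have he : e = ℓ.succ.succ := stdB_adj_lab hadj
      subst he
      exact Or.inl ⟨mB_lab_exists ℓ, fun ⟨p, hp⟩ => mB_no_inf_edge p ℓ hp⟩
  exc_vert := by
    intro i p
    exact ⟨labB (labIdx i), stdB_infVert_lab _, rfl⟩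
  mu1_vert := by
    intro i
    fin_cases i
    · exact ⟨fun _ => by norm_num, fun _ => ⟨labB 0, stdB_infVert_lab _, rfl⟩⟩
    · exact ⟨fun _ => by norm_num, fun _ => ⟨labB 1, stdB_infVert_lab _, rfl⟩⟩
    · refine ⟨fun ⟨v, hv, hm⟩ => ?_, fun h => absurd h (by norm_num)⟩
      obtain rfl : (0 : Fin 11) = v := Sum.inl.inj hm
      exact absurd hv stdB_not_infVert_0
    · refine ⟨fun ⟨v, hv, hm⟩ => ?_, fun h => absurd h (by norm_num)⟩
      exact (Sum.inr_ne_inl hm).elim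
    · refine ⟨fun ⟨v, hv, hm⟩ => ?_, fun h => absurd h (by norm_num)⟩
      exact (Sum.inr_ne_inl hm).elim
  floor_once := by
    intro i v hv e e' he he' hx1 hx2
    obtain ⟨p, u, hm, hu⟩ := hx1
    obtain ⟨p', u', hm', hu'⟩ := hx2
    obtain rfl : labB (labIdx i) = u := Sum.inl.inj hm
    obtain rfl : labB (labIdx i) = u' := Sum.inl.inj hm'
    rw [stdB_adj_lab hu, stdB_adj_lab hu']
  mu1_weight := by
    intro i h v e hm hadj
    fin_cases i
    · obtain rfl : labB 0 = v := Sum.inl.inj hm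
      rw [stdB_adj_lab hadj, stdB_ws]
      rfl
    · obtain rfl : labB 1 = v := Sum.inl.inj hm
      rw [stdB_adj_lab hadj, stdB_ws]
      rfl
    · exact absurd h (by norm_num)
    · exact absurd h (by norm_num)
    · exact absurd h (by norm_num)
  mu2_edges := by
    have hempty : (Finset.univ.filter fun e : Fin 10 =>
        (stdB S1 S2 h1 h2 hd).InfEdge e ∧ ∃ i : Fin 5, mB (Sum.inl i) = Sum.inr e) = ∅ := by
      rw [Finset.filter_eq_empty_iff]
      rintro e _ ⟨hinf, i, hi⟩
      rcases ecaseB e with rfl | rfl | ⟨ℓ, rfl⟩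
      · obtain ⟨v, hadj, hv⟩ := hinf
        rcases hadj with h | h
        · rw [stdB_src0] at h; subst h; exact stdB_not_infVert_0 hv
        · rw [stdB_tgt0] at h; subst h; exact stdB_not_infVert_1 hv
      · obtain ⟨v, hadj, hv⟩ := hinf
        rcases hadj with h | h
        · rw [stdB_src1] at h; subst h; exact stdB_not_infVert_0 hv
        · rw [stdB_tgt1] at h; subst h; exact stdB_not_infVert_2 hv
      · exact mB_no_inf_edge _ ℓ hi
    have hfin : Multiset.map (stdB S1 S2 h1 h2 hd).w ((Finset.univ.filter fun e : Fin 10 =>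
        (stdB S1 S2 h1 h2 hd).InfEdge e ∧ ∃ i : Fin 5, mB (Sum.inl i) = Sum.inr e).val)
        = (↑([] : List ℕ) : Multiset ℕ) := by
      rw [hempty]; rfl
    exact hfin

@[reducible] def repB (S1 S2 : Finset (Fin 8)) (h1 : S1.card ≤ 1) (h2 : S2.card ≤ 1)
    (hd : Disjoint S1 S2) : MarkedFD 6 0 4 (fun _ => 1) [1, 1] [] where
  G := stdB S1 S2 h1 h2 hd
  m := mB
  fd := fdB S1 S2 h1 h2 hd
  marking := markB S1 S2 h1 h2 hd

end FD4
end StdB2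

noncomputable section SumPart
namespace FD4
open WOGraph LaurentPolynomial

lemma qInt_one : qInt 1 = 1 := by
  unfold qInt
  rw [Finset.sum_range_one]
  norm_num

variable {S : Finset (Fin 8)} {hS : S.card ≤ 3}

lemma stdA_infEdge_succ (ℓ : Fin 8) : (stdA S hS).InfEdge ℓ.succ :=
  ⟨labA ℓ, Or.inl (stdA_srcs ℓ), stdA_infVert_lab ℓ⟩

lemma stdA_not_infEdge_0 : ¬ (stdA S hS).InfEdge (0 : Fin 9) := by
  rintro ⟨v, hadj, hv⟩
  rcases hadj with h | h
  · rw [stdA_src0] at h; subst h; exact stdA_not_infVert_0 hv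
  · rw [stdA_tgt0] at h; subst h; exact stdA_not_infVert_1 hv

lemma repA_EdgeMu2 : (repA S hS).EdgeMu2 = ∅ := by
  rw [MarkedFD.EdgeMu2, Finset.filter_eq_empty_iff]
  rintro e _ ⟨hinf, i, hi⟩
  have hinf' : (stdA S hS).InfEdge e := hinf
  have hi' : mA (Sum.inl i) = (repA S hS).m (Sum.inl i) := rfl
  rcases ecaseA e with rfl | ⟨ℓ, rfl⟩
  · exact stdA_not_infEdge_0 (S := S) (hS := hS) hinf'
  · exact mA_no_inf_edge (Sum.inl i) ℓ (hi'.trans hi)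

lemma repA_EdgeMu1_w : ∀ e ∈ (repA S hS).EdgeMu1, (repA S hS).G.w e = 1 := by
  intro e he
  rw [MarkedFD.EdgeMu1, Finset.mem_filter] at he
  obtain ⟨-, i, hi2, v, hm, hadj⟩ := he
  have hadj' : (stdA S hS).Adj e v := hadj
  fin_cases i
  · obtain rfl : labA 0 = v := Sum.inl.inj hm
    rw [stdA_adj_lab hadj']; exact stdA_ws (S := S) (hS := hS) _
  · obtain rfl : labA 1 = v := Sum.inl.inj hm
    rw [stdA_adj_lab hadj']; exact stdA_ws (S := S) (hS := hS) _
  · exact absurd hi2 (by norm_num)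
  · exact absurd hi2 (by norm_num)
  · exact absurd hi2 (by norm_num)

lemma repA_EdgeO : (repA S hS).EdgeO = ({0} : Finset (Fin 9)) := by
  ext e
  rw [MarkedFD.EdgeO, Finset.mem_filter, Finset.mem_singleton]
  constructor
  · rintro ⟨-, hni⟩
    rcases ecaseA e with rfl | ⟨ℓ, rfl⟩
    · rfl
    · exact absurd (stdA_infEdge_succ (S := S) (hS := hS) ℓ) hni
  · rintro rfl
    exact ⟨Finset.mem_univ _, stdA_not_infEdge_0 (S := S) (hS := hS)⟩

lemma multqA : (repA S hS).multq = qInt (4 - S.card) ^ 2 := by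
  rw [MarkedFD.multq, repA_EdgeMu2, repA_EdgeO]
  rw [Finset.prod_empty, Finset.prod_empty]
  have hm1 : (∏ e ∈ (repA S hS).EdgeMu1,
      (C (((repA S hS).G.w e : ℚ))⁻¹ * qInt ((repA S hS).G.w e))) = 1 :=
    Finset.prod_eq_one (fun e he => by rw [repA_EdgeMu1_w e he, qInt_one]; norm_num)
  rw [hm1, Finset.prod_singleton, one_mul, one_mul, one_mul]
  rfl

variable {S1 S2 : Finset (Fin 8)} {h1 : S1.card ≤ 1} {h2 : S2.card ≤ 1}
  {hd : Disjoint S1 S2}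

lemma stdB_infEdge_succ (ℓ : Fin 8) : (stdB S1 S2 h1 h2 hd).InfEdge ℓ.succ.succ :=
  ⟨labB ℓ, Or.inl (stdB_srcs ℓ), stdB_infVert_lab ℓ⟩

lemma stdB_not_infEdge_0 : ¬ (stdB S1 S2 h1 h2 hd).InfEdge (0 : Fin 10) := by
  rintro ⟨v, hadj, hv⟩
  rcases hadj with h | h
  · rw [stdB_src0] at h; subst h; exact stdB_not_infVert_0 hv
  · rw [stdB_tgt0] at h; subst h; exact stdB_not_infVert_1 hv

lemma stdB_not_infEdge_1 : ¬ (stdB S1 S2 h1 h2 hd).InfEdge (1 : Fin 10) := by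
  rintro ⟨v, hadj, hv⟩
  rcases hadj with h | h
  · rw [stdB_src1] at h; subst h; exact stdB_not_infVert_0 hv
  · rw [stdB_tgt1] at h; subst h; exact stdB_not_infVert_2 hv

lemma repB_EdgeMu2 : (repB S1 S2 h1 h2 hd).EdgeMu2 = ∅ := by
  rw [MarkedFD.EdgeMu2, Finset.filter_eq_empty_iff]
  rintro e _ ⟨hinf, i, hi⟩
  have hinf' : (stdB S1 S2 h1 h2 hd).InfEdge e := hinf
  have hi' : mB (Sum.inl i) = (repB S1 S2 h1 h2 hd).m (Sum.inl i) := rfl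
  rcases ecaseB e with rfl | rfl | ⟨ℓ, rfl⟩
  · exact stdB_not_infEdge_0 (S1 := S1) (S2 := S2) (h1 := h1) (h2 := h2) (hd := hd) hinf'
  · exact stdB_not_infEdge_1 (S1 := S1) (S2 := S2) (h1 := h1) (h2 := h2) (hd := hd) hinf'
  · exact mB_no_inf_edge (Sum.inl i) ℓ (hi'.trans hi)

lemma repB_EdgeMu1_w : ∀ e ∈ (repB S1 S2 h1 h2 hd).EdgeMu1,
    (repB S1 S2 h1 h2 hd).G.w e = 1 := by
  intro e he
  rw [MarkedFD.EdgeMu1, Finset.mem_filter] at he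
  obtain ⟨-, i, hi2, v, hm, hadj⟩ := he
  have hadj' : (stdB S1 S2 h1 h2 hd).Adj e v := hadj
  fin_cases i
  · obtain rfl : labB 0 = v := Sum.inl.inj hm
    rw [stdB_adj_lab hadj']
    exact stdB_ws (S1 := S1) (S2 := S2) (h1 := h1) (h2 := h2) (hd := hd) _
  · obtain rfl : labB 1 = v := Sum.inl.inj hm
    rw [stdB_adj_lab hadj']
    exact stdB_ws (S1 := S1) (S2 := S2) (h1 := h1) (h2 := h2) (hd := hd) _
  · exact absurd hi2 (by norm_num)
  · exact absurd hi2 (by norm_num)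
  · exact absurd hi2 (by norm_num)

lemma repB_EdgeO : (repB S1 S2 h1 h2 hd).EdgeO = ({0, 1} : Finset (Fin 10)) := by
  ext e
  rw [MarkedFD.EdgeO, Finset.mem_filter, Finset.mem_insert, Finset.mem_singleton]
  constructor
  · rintro ⟨-, hni⟩
    rcases ecaseB e with rfl | rfl | ⟨ℓ, rfl⟩
    · exact Or.inl rfl
    · exact Or.inr rfl
    · exact absurd
        (stdB_infEdge_succ (S1 := S1) (S2 := S2) (h1 := h1) (h2 := h2) (hd := hd) ℓ) hni
  · rintro (rfl | rfl)
    · exact ⟨Finset.mem_univ _,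
        stdB_not_infEdge_0 (S1 := S1) (S2 := S2) (h1 := h1) (h2 := h2) (hd := hd)⟩
    · exact ⟨Finset.mem_univ _,
        stdB_not_infEdge_1 (S1 := S1) (S2 := S2) (h1 := h1) (h2 := h2) (hd := hd)⟩

lemma multqB : (repB S1 S2 h1 h2 hd).multq
    = qInt (2 - S1.card) ^ 2 * qInt (2 - S2.card) ^ 2 := by
  rw [MarkedFD.multq, repB_EdgeMu2, repB_EdgeO]
  rw [Finset.prod_empty, Finset.prod_empty]
  have hm1 : (∏ e ∈ (repB S1 S2 h1 h2 hd).EdgeMu1,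
      (C (((repB S1 S2 h1 h2 hd).G.w e : ℚ))⁻¹ * qInt ((repB S1 S2 h1 h2 hd).G.w e))) = 1 :=
    Finset.prod_eq_one (fun e he => by rw [repB_EdgeMu1_w e he, qInt_one]; norm_num)
  rw [hm1, Finset.prod_pair (by decide : (0 : Fin 10) ≠ 1), one_mul, one_mul, one_mul]
  rfl

/-- index types -/
abbrev IdxA : Type := {S : Finset (Fin 8) // S.card ≤ 3}
abbrev IdxB : Type :=
  {p : Finset (Fin 8) × Finset (Fin 8) // p.1.card ≤ 1 ∧ p.2.card ≤ 1 ∧ Disjoint p.1 p.2}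

def rep : IdxA ⊕ IdxB → MarkedFD 6 0 4 (fun _ => 1) [1, 1] [] :=
  Sum.elim (fun i => repA i.1 i.2) (fun p => repB p.1.1 p.1.2 p.2.1 p.2.2.1 p.2.2.2)

lemma sum_filter_card_le {M : Type*} [AddCommMonoid M] (n : ℕ) (g : ℕ → M) :
    ∑ S ∈ Finset.univ.filter (fun S : Finset (Fin 8) => S.card ≤ n), g S.card
      = ∑ k ∈ Finset.range (n+1), (Nat.choose 8 k) • g k := by
  rw [← Finset.sum_fiberwise_of_maps_to (g := fun S : Finset (Fin 8) => S.card)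
      (t := Finset.range (n+1))
      (fun S hS => Finset.mem_range.2 (by
        simp only [Finset.mem_filter] at hS
        exact Nat.lt_succ_of_le hS.2))]
  refine Finset.sum_congr rfl fun k hk => ?_
  have hkn : k ≤ n := by
    simp only [Finset.mem_range] at hk; omega
  have hfil : ((Finset.univ.filter (fun S : Finset (Fin 8) => S.card ≤ n)).filter
      (fun S => S.card = k)) = Finset.powersetCard k Finset.univ := by
    rw [Finset.powersetCard_eq_filter, Finset.powerset_univ]
    ext S
    simp only [Finset.mem_filter, Finset.mem_univ, true_and]
    constructor
    · rintro ⟨-, h⟩; exact h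
    · intro h; exact ⟨by omega, h⟩
  rw [hfil]
  have hcon : ∑ S ∈ Finset.powersetCard k Finset.univ, g S.card
      = ∑ _S ∈ Finset.powersetCard k (Finset.univ : Finset (Fin 8)), g k :=
    Finset.sum_congr rfl (fun S hS => by rw [(Finset.mem_powersetCard.1 hS).2])
  rw [hcon, Finset.sum_const, Finset.card_powersetCard, Finset.card_univ, Fintype.card_fin]

lemma sumA : ∑ i : IdxA, (rep (Sum.inl i)).multq
    = qInt 4 ^ 2 + 8 * qInt 3 ^ 2 + 28 * qInt 2 ^ 2 + 56 := by
  have h1 : ∀ i : IdxA, (rep (Sum.inl i)).multq = qInt (4 - i.1.card) ^ 2 :=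
    fun i => multqA
  rw [Finset.sum_congr rfl (fun i _ => h1 i)]
  rw [← Finset.sum_subtype (Finset.univ.filter (fun S : Finset (Fin 8) => S.card ≤ 3))
      (fun S => by simp) (fun S => qInt (4 - S.card) ^ 2)]
  rw [sum_filter_card_le 3 (fun k => qInt (4 - k) ^ 2)]
  rw [Finset.sum_range_succ, Finset.sum_range_succ, Finset.sum_range_succ,
      Finset.sum_range_one]
  have hc2 : Nat.choose 8 2 = 28 := by decide
  have hc3 : Nat.choose 8 3 = 56 := by decide
  rw [hc2, hc3]
  norm_num [qInt_one]
  try ring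

lemma sumB : ∑ i : IdxB, (rep (Sum.inr i)).multq
    = (qInt 2 ^ 2 + 8) * (qInt 2 ^ 2 + 8) - 8 := by
  have h1 : ∀ i : IdxB, (rep (Sum.inr i)).multq
      = qInt (2 - i.1.1.card) ^ 2 * qInt (2 - i.1.2.card) ^ 2 :=
    fun i => multqB
  rw [Finset.sum_congr rfl (fun i _ => h1 i)]
  rw [← Finset.sum_subtype (Finset.univ.filter
      (fun p : Finset (Fin 8) × Finset (Fin 8) =>
        p.1.card ≤ 1 ∧ p.2.card ≤ 1 ∧ Disjoint p.1 p.2))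
      (fun p => by simp) (fun p => qInt (2 - p.1.card) ^ 2 * qInt (2 - p.2.card) ^ 2)]
  set A1 : Finset (Finset (Fin 8)) := Finset.univ.filter (fun S => S.card ≤ 1) with hA1
  have hsplit : (Finset.univ.filter
      (fun p : Finset (Fin 8) × Finset (Fin 8) =>
        p.1.card ≤ 1 ∧ p.2.card ≤ 1 ∧ Disjoint p.1 p.2))
      = (A1 ×ˢ A1).filter (fun p => Disjoint p.1 p.2) := by
    ext p
    simp only [hA1, Finset.mem_filter, Finset.mem_product, Finset.mem_univ, true_and]
    exact ⟨fun ⟨a, b, c⟩ => ⟨⟨a, b⟩, c⟩, fun ⟨⟨a, b⟩, c⟩ => ⟨a, b, c⟩⟩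
  rw [hsplit]
  have hdiag : (A1 ×ˢ A1).filter (fun p => ¬ Disjoint p.1 p.2)
      = (Finset.univ.filter (fun S : Finset (Fin 8) => S.card = 1)).image
          (fun S => (S, S)) := by
    ext p
    simp only [Finset.mem_filter, Finset.mem_product, Finset.mem_image, Finset.mem_univ,
      true_and, hA1]
    constructor
    · rintro ⟨⟨hp1, hp2⟩, hnd⟩
      obtain ⟨x, hx1, hx2⟩ := Finset.not_disjoint_iff.1 hnd
      have e1 : p.1 = {x} := by
        ext y
        simp only [Finset.mem_singleton]
        exact ⟨fun hy => Finset.card_le_one.1 hp1 y hy x hx1, fun hy => hy ▸ hx1⟩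
      have e2 : p.2 = {x} := by
        ext y
        simp only [Finset.mem_singleton]
        exact ⟨fun hy => Finset.card_le_one.1 hp2 y hy x hx2, fun hy => hy ▸ hx2⟩
      exact ⟨{x}, by simp, by rw [Prod.ext_iff]; exact ⟨e1.symm, e2.symm⟩⟩
    · rintro ⟨T, hT, rfl⟩
      refine ⟨⟨hT.le, hT.le⟩, ?_⟩
      intro hdis
      have hd' : Disjoint T T := hdis
      rw [Finset.disjoint_self_iff_empty] at hd'
      rw [hd'] at hT
      simp at hT
  have hfull := Finset.sum_filter_add_sum_filter_not (A1 ×ˢ A1)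
    (fun p : Finset (Fin 8) × Finset (Fin 8) => Disjoint p.1 p.2)
    (fun p => qInt (2 - p.1.card) ^ 2 * qInt (2 - p.2.card) ^ 2)
  have hprod : ∑ p ∈ A1 ×ˢ A1, qInt (2 - p.1.card) ^ 2 * qInt (2 - p.2.card) ^ 2
      = (qInt 2 ^ 2 + 8) * (qInt 2 ^ 2 + 8) := by
    rw [Finset.sum_product' A1 A1 (fun a b => qInt (2 - a.card) ^ 2 * qInt (2 - b.card) ^ 2)]
    rw [← Finset.sum_mul_sum A1 A1 (fun a => qInt (2 - a.card) ^ 2)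
      (fun b => qInt (2 - b.card) ^ 2)]
    have hone : ∑ S ∈ A1, qInt (2 - S.card) ^ 2 = qInt 2 ^ 2 + 8 := by
      rw [hA1, sum_filter_card_le 1 (fun k => qInt (2 - k) ^ 2)]
      rw [Finset.sum_range_succ, Finset.sum_range_one]
      norm_num [qInt_one]
    rw [hone]
  have hdsum : ∑ p ∈ (A1 ×ˢ A1).filter (fun p => ¬ Disjoint p.1 p.2),
      qInt (2 - p.1.card) ^ 2 * qInt (2 - p.2.card) ^ 2 = 8 := by
    rw [hdiag, Finset.sum_image (fun x _ y _ h => (Prod.ext_iff.1 h).1)]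
    have : ∀ T ∈ Finset.univ.filter (fun S : Finset (Fin 8) => S.card = 1),
        qInt (2 - T.card) ^ 2 * qInt (2 - T.card) ^ 2 = 1 := by
      intro T hT
      simp only [Finset.mem_filter] at hT
      rw [hT.2, qInt_one]
      norm_num
    rw [Finset.sum_congr rfl this, Finset.sum_const]
    have hcard : (Finset.univ.filter (fun S : Finset (Fin 8) => S.card = 1)).card = 8 := by
      have : (Finset.univ.filter (fun S : Finset (Fin 8) => S.card = 1))
          = Finset.powersetCard 1 Finset.univ := by
        rw [Finset.powersetCard_eq_filter, Finset.powerset_univ]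
      rw [this, Finset.card_powersetCard, Finset.card_univ, Fintype.card_fin]
      decide
    rw [hcard]
    have hch : Nat.choose 8 1 = 8 := by decide
    norm_num
  rw [hdsum] at hfull
  rw [hprod] at hfull
  exact eq_sub_of_add_eq hfull

lemma total_sum : ∑ i : IdxA ⊕ IdxB, (rep i).multq
    = qInt 2 ^ 4 + qInt 4 ^ 2 + 8 * qInt 3 ^ 2 + 44 * qInt 2 ^ 2 + 112 := by
  rw [Fintype.sum_sum_type, sumA, sumB]
  ring

end FD4
end SumPart

noncomputable section Classify1
namespace FD4
open WOGraph

abbrev MD := Fin 5 ⊕ (Σ _ : Fin 6, Fin 1)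

/-- mark of label ℓ : labels 0,1 are the first two A₀-marks, labels 2..7 the A_i marks -/
def mark (ℓ : Fin 8) : MD :=
  if h : ℓ.val < 2 then Sum.inl ⟨ℓ.val, by omega⟩
  else Sum.inr ⟨⟨ℓ.val - 2, by omega⟩, 0⟩

lemma mark_inj : Function.Injective mark := by decide

lemma mA_mark (ℓ : Fin 8) : mA (mark ℓ) = Sum.inl (labA ℓ) := by revert ℓ; decide
lemma mB_mark (ℓ : Fin 8) : mB (mark ℓ) = Sum.inl (labB ℓ) := by revert ℓ; decide

variable (X : MarkedFD 6 0 4 (fun _ => 1) [1, 1] [])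

/-- data extracted from any marked floor diagram with our parameters -/
structure Common where
  u : Fin 8 → Fin X.G.nV
  eu : Fin 8 → Fin X.G.nE
  hu_inf : ∀ ℓ, X.G.InfVert (u ℓ)
  hu_m : ∀ ℓ, X.m (mark ℓ) = Sum.inl (u ℓ)
  hsrc : ∀ ℓ, X.G.src (eu ℓ) = u ℓ
  hadj_uniq : ∀ ℓ e', X.G.Adj e' (u ℓ) → e' = eu ℓ
  htgt_ne : ∀ ℓ e', X.G.tgt e' ≠ u ℓ
  hw1 : ∀ ℓ, X.G.w (eu ℓ) = 1
  hinf_iff : ∀ v, X.G.InfVert v ↔ ∃ ℓ, u ℓ = v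

namespace Common

variable {X}

lemma hu_inj (C : Common X) : Function.Injective C.u := by
  intro a b hab
  have h := X.marking.inj (((C.hu_m a).trans (by rw [hab, ← C.hu_m b])) : X.m (mark a) = X.m (mark b))
  exact mark_inj h

lemma heu_inj (C : Common X) : Function.Injective C.eu := by
  intro a b hab
  have := (C.hsrc a).symm.trans (by rw [hab, C.hsrc b])
  exact C.hu_inj this

lemma hinfEdge_iff (C : Common X) : ∀ e, X.G.InfEdge e ↔ ∃ ℓ, e = C.eu ℓ := by
  intro e
  constructor
  · rintro ⟨v, hadj, hv⟩
    obtain ⟨ℓ, rfl⟩ := (C.hinf_iff v).1 hv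
    exact ⟨ℓ, C.hadj_uniq ℓ e hadj⟩
  · rintro ⟨ℓ, rfl⟩
    exact ⟨C.u ℓ, Or.inl (C.hsrc ℓ), C.hu_inf ℓ⟩

lemma tgt_not_inf (C : Common X) : ∀ e, ¬ X.G.InfVert (X.G.tgt e) := by
  intro e hv
  obtain ⟨ℓ, hℓ⟩ := (C.hinf_iff _).1 hv
  exact C.htgt_ne ℓ e hℓ.symm

end Common

def exists_common : Common X := by
  have hu : ∀ ℓ : Fin 8, ∃ v, X.G.InfVert v ∧ X.m (mark ℓ) = Sum.inl v := by
    intro ℓ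
    by_cases h : ℓ.val < 2
    · have hmv := (X.marking.mu1_vert ⟨ℓ.val, by omega⟩).2 (by simpa using h)
      obtain ⟨v, hv, hm⟩ := hmv
      refine ⟨v, hv, ?_⟩
      rw [mark, dif_pos h]
      exact hm
    · obtain ⟨v, hv, hm⟩ := X.marking.exc_vert ⟨ℓ.val - 2, by omega⟩ 0
      refine ⟨v, hv, ?_⟩
      rw [mark, dif_neg h]
      exact hm
  choose u hu_inf hu_m using hu
  have hu_inj : Function.Injective u := by
    intro a b hab
    exact mark_inj (X.marking.inj ((hu_m a).trans (by rw [hab, ← hu_m b])))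
  -- structure of each infinite vertex
  choose eu hsrc hadj_uniq htgt_ne hdiv using fun ℓ => X.G.infVert_struct (hu_inf ℓ)
  -- the set of infinite vertices
  set I := Finset.univ.filter (fun v => X.G.InfVert v) with hI
  have hsub : Finset.univ.image u ⊆ I := by
    intro v hv
    obtain ⟨ℓ, -, rfl⟩ := Finset.mem_image.1 hv
    simp only [hI, Finset.mem_filter, Finset.mem_univ, true_and]
    exact hu_inf ℓ
  have hcard_im : (Finset.univ.image u).card = 8 := by
    rw [Finset.card_image_of_injective _ hu_inj, Finset.card_univ, Fintype.card_fin]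
  have hneg : ∀ v ∈ I, X.G.div v ≤ -1 := by
    intro v hv
    simp only [hI, Finset.mem_filter] at hv
    exact X.fd.div_inf v hv.2
  have htot : (∑ v ∈ I, X.G.div v) = -8 := by
    have h := X.fd.total_div
    norm_num at h
    exact h
  have hIcard : I.card ≤ 8 := by
    have hle : (∑ v ∈ I, X.G.div v) ≤ ∑ v ∈ I, (-1 : ℤ) := Finset.sum_le_sum hneg
    rw [Finset.sum_const, htot] at hle
    have : (I.card : ℤ) ≤ 8 := by
      rw [nsmul_eq_mul] at hle
      linarith
    exact_mod_cast this
  have hIeq : Finset.univ.image u = I := Finset.eq_of_subset_of_card_le hsub (by omega)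
  have hIcard8 : I.card = 8 := by rw [← hIeq, hcard_im]
  -- all divergences on I are -1
  have hdiv1 : ∀ v ∈ I, X.G.div v = -1 := by
    have hzero : (∑ v ∈ I, (X.G.div v + 1)) = 0 := by
      rw [Finset.sum_add_distrib, htot, Finset.sum_const, hIcard8]
      norm_num
    have hnonpos : ∀ v ∈ I, X.G.div v + 1 ≤ 0 := fun v hv => by
      have := hneg v hv; omega
    intro v hv
    have := (Finset.sum_eq_zero_iff_of_nonpos hnonpos).1 hzero v hv
    omega
  have hw1 : ∀ ℓ, X.G.w (eu ℓ) = 1 := by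
    intro ℓ
    have h1 : X.G.div (u ℓ) = -1 := by
      apply hdiv1
      simp only [hI, Finset.mem_filter, Finset.mem_univ, true_and]
      exact hu_inf ℓ
    have h2 := hdiv ℓ
    rw [h1] at h2
    omega
  refine ⟨u, eu, hu_inf, hu_m, hsrc, hadj_uniq, ?_, hw1, ?_⟩
  · intro ℓ e'; exact htgt_ne ℓ e'
  · intro v
    constructor
    · intro hv
      have : v ∈ I := by
        simp only [hI, Finset.mem_filter, Finset.mem_univ, true_and]; exact hv
      rw [← hIeq] at this
      obtain ⟨ℓ, -, hℓ⟩ := Finset.mem_image.1 this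
      exact ⟨ℓ, hℓ⟩
    · rintro ⟨ℓ, rfl⟩
      exact hu_inf ℓ

end FD4
end Classify1

noncomputable section Classify2
namespace FD4
open WOGraph

variable {X : MarkedFD 6 0 4 (fun _ => 1) [1, 1] []}

/-- the finset of floors -/
def FFl (X : MarkedFD 6 0 4 (fun _ => 1) [1, 1] []) : Finset (Fin X.G.nV) :=
  Finset.univ.filter (fun v => ¬ X.G.InfVert v)

/-- the finset of non-infinite edges -/
def EOl (X : MarkedFD 6 0 4 (fun _ => 1) [1, 1] []) : Finset (Fin X.G.nE) :=
  Finset.univ.filter (fun e => ¬ X.G.InfEdge e)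

lemma mem_FFl {v : Fin X.G.nV} : v ∈ FFl X ↔ ¬ X.G.InfVert v := by
  simp [FFl]

lemma mem_EOl {e : Fin X.G.nE} : e ∈ EOl X ↔ ¬ X.G.InfEdge e := by
  simp [EOl]

lemma sumI (X : MarkedFD 6 0 4 (fun _ => 1) [1, 1] []) :
    (∑ v ∈ Finset.univ.filter (fun v => X.G.InfVert v), X.G.div v) = -8 := by
  have h := X.fd.total_div
  norm_num at h
  exact h

lemma sumFFl (X : MarkedFD 6 0 4 (fun _ => 1) [1, 1] []) :
    (∑ v ∈ FFl X, X.G.div v) = 8 := by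
  have h := Finset.sum_filter_add_sum_filter_not Finset.univ
    (fun v => X.G.InfVert v) X.G.div
  rw [X.G.sum_div_eq_zero, sumI X] at h
  have h2 : (∑ v ∈ FFl X, X.G.div v) = -(-8 : ℤ) := by
    rw [FFl]; linarith
  rw [h2]; norm_num

namespace Common

lemma filterI_eq (K : Common X) : Finset.univ.filter (fun v => X.G.InfVert v)
    = Finset.univ.image K.u := by
  ext v
  simp only [Finset.mem_filter, Finset.mem_univ, true_and, Finset.mem_image]
  constructor
  · intro hv
    obtain ⟨ℓ, hℓ⟩ := (K.hinf_iff v).1 hv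
    exact ⟨ℓ, hℓ⟩
  · rintro ⟨ℓ, -, rfl⟩
    exact K.hu_inf ℓ

lemma cardI (K : Common X) : (Finset.univ.filter (fun v => X.G.InfVert v)).card = 8 := by
  rw [K.filterI_eq, Finset.card_image_of_injective _ K.hu_inj, Finset.card_univ,
    Fintype.card_fin]

lemma card_nV (K : Common X) : X.G.nV = 8 + (FFl X).card := by
  have h := Finset.card_filter_add_card_filter_not
    (s := (Finset.univ : Finset (Fin X.G.nV))) (p := fun v => X.G.InfVert v)
  rw [cardI K, Finset.card_univ, Fintype.card_fin] at h
  rw [FFl]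
  omega

lemma filterIE_eq (K : Common X) : Finset.univ.filter (fun e => X.G.InfEdge e)
    = Finset.univ.image K.eu := by
  ext e
  simp only [Finset.mem_filter, Finset.mem_univ, true_and, Finset.mem_image]
  constructor
  · intro he
    obtain ⟨ℓ, rfl⟩ := (K.hinfEdge_iff e).1 he
    exact ⟨ℓ, rfl⟩
  · rintro ⟨ℓ, -, rfl⟩
    exact (K.hinfEdge_iff _).2 ⟨ℓ, rfl⟩

lemma card_EO (K : Common X) : (EOl X).card = (FFl X).card - 1 ∧ 1 ≤ (FFl X).card := by
  have h := Finset.card_filter_add_card_filter_not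
    (s := (Finset.univ : Finset (Fin X.G.nE))) (p := fun e => X.G.InfEdge e)
  rw [K.filterIE_eq, Finset.card_image_of_injective _ K.heu_inj, Finset.card_univ,
    Finset.card_univ, Fintype.card_fin, Fintype.card_fin] at h
  have hb := X.fd.betti
  have hnv := K.card_nV
  constructor
  · rw [EOl]; omega
  · omega

/-- structure of non-infinite edges -/
lemma EO_struct (K : Common X) : ∀ e ∈ EOl X, ¬ X.G.InfVert (X.G.src e) ∧ ¬ X.G.InfVert (X.G.tgt e)
    ∧ X.G.div (X.G.src e) = 4 := by
  intro e he
  rw [mem_EOl] at he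
  have hsrc_ninf : ¬ X.G.InfVert (X.G.src e) := by
    intro hv
    obtain ⟨ℓ, hℓ⟩ := (K.hinf_iff _).1 hv
    have h2 : e = K.eu ℓ := K.hadj_uniq ℓ e (Or.inl hℓ.symm)
    exact he ((K.hinfEdge_iff e).2 ⟨ℓ, h2⟩)
  refine ⟨hsrc_ninf, K.tgt_not_inf e, ?_⟩
  rcases X.fd.div_floor _ hsrc_ninf with h2 | h4
  · exfalso
    have hsink := X.fd.sink_of_two _ hsrc_ninf h2
    have h3 := hsink e (Or.inl rfl)
    exact X.G.no_loop X.fd.acyclic e h3.symm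
  · exact h4

/-- division formula for a floor receiving exactly one non-infinite edge and
with no outgoing edges -/
lemma div_tgt (K : Common X) (Q : Fin X.G.nV) (e0 : Fin X.G.nE)
    (hQt : X.G.tgt e0 = Q) (h0inf : ¬ X.G.InfEdge e0)
    (hsrcQ : ∀ e, X.G.src e ≠ Q)
    (honly : ∀ e, ¬ X.G.InfEdge e → X.G.tgt e = Q → e = e0) :
    X.G.div Q = (X.G.w e0 : ℤ) +
      ((Finset.univ.filter fun ℓ : Fin 8 => X.G.tgt (K.eu ℓ) = Q).card : ℤ) := by
  unfold WOGraph.div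
  have hempty : (Finset.univ.filter fun e => X.G.src e = Q) = ∅ := by
    rw [Finset.filter_eq_empty_iff]
    intro e _
    exact hsrcQ e
  rw [hempty, Finset.sum_empty, sub_zero]
  have hsplit : (Finset.univ.filter fun e => X.G.tgt e = Q)
      = insert e0 ((Finset.univ.filter fun ℓ : Fin 8 => X.G.tgt (K.eu ℓ) = Q).image K.eu)
      := by
    ext e
    simp only [Finset.mem_filter, Finset.mem_univ, true_and, Finset.mem_insert,
      Finset.mem_image]
    constructor
    · intro ht
      by_cases hie : X.G.InfEdge e
      · obtain ⟨ℓ, rfl⟩ := (K.hinfEdge_iff e).1 hie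
        exact Or.inr ⟨ℓ, ht, rfl⟩
      · exact Or.inl (honly e hie ht)
    · rintro (rfl | ⟨ℓ, hℓ, rfl⟩)
      · exact hQt
      · exact hℓ
  rw [hsplit]
  have hnm : e0 ∉ (Finset.univ.filter fun ℓ : Fin 8 => X.G.tgt (K.eu ℓ) = Q).image K.eu := by
    intro hm
    obtain ⟨ℓ, -, hℓ⟩ := Finset.mem_image.1 hm
    exact h0inf ((K.hinfEdge_iff e0).2 ⟨ℓ, hℓ.symm⟩)
  rw [Finset.sum_insert hnm]
  congr 1
  rw [Finset.sum_image (fun a _ b _ h => K.heu_inj h)]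
  rw [Finset.sum_congr rfl (fun ℓ _ => by rw [K.hw1 ℓ])]
  rw [Finset.sum_const, nsmul_eq_mul]
  norm_num

/-- sources of non-infinite edges never coincide with a floor of divergence ≠ 4 -/
lemma src_ne_of_floor (K : Common X) (Q : Fin X.G.nV) (hQn : ¬ X.G.InfVert Q)
    (hQ4 : X.G.div Q ≠ 4) : ∀ e, X.G.src e ≠ Q := by
  intro e he
  by_cases hie : X.G.InfEdge e
  · obtain ⟨ℓ, rfl⟩ := (K.hinfEdge_iff e).1 hie
    rw [K.hsrc ℓ] at he
    exact hQn (he ▸ K.hu_inf ℓ)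
  · exact hQ4 (he ▸ (K.EO_struct e (mem_EOl.2 hie)).2.2)

/-- main case split -/
lemma case_split (K : Common X) : ((FFl X).card = 2 ∧ ∀ v ∈ FFl X, X.G.div v = 4)
    ∨ ((FFl X).card = 3 ∧ ((FFl X).filter (fun v => X.G.div v = 4)).card = 1) := by
  have hdisj : ∀ v ∈ (FFl X).filter (fun v => ¬ (X.G.div v = 4)), X.G.div v = 2 := by
    intro v hv
    rw [Finset.mem_filter] at hv
    rcases X.fd.div_floor v (mem_FFl.1 hv.1) with h | h
    · exact h
    · exact absurd h hv.2
  have hcards : ((FFl X).filter (fun v => X.G.div v = 4)).card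
      + ((FFl X).filter (fun v => ¬ (X.G.div v = 4))).card = (FFl X).card :=
    Finset.card_filter_add_card_filter_not _
  have hsum : (∑ v ∈ (FFl X).filter (fun v => X.G.div v = 4), X.G.div v)
      + (∑ v ∈ (FFl X).filter (fun v => ¬ (X.G.div v = 4)), X.G.div v) = 8 := by
    rw [Finset.sum_filter_add_sum_filter_not, sumFFl]
  have hs4 : (∑ v ∈ (FFl X).filter (fun v => X.G.div v = 4), X.G.div v)
      = 4 * ((FFl X).filter (fun v => X.G.div v = 4)).card := by
    rw [Finset.sum_congr rfl (fun v hv => (Finset.mem_filter.1 hv).2), Finset.sum_const,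
      nsmul_eq_mul, mul_comm]
  have hs2 : (∑ v ∈ (FFl X).filter (fun v => ¬ (X.G.div v = 4)), X.G.div v)
      = 2 * ((FFl X).filter (fun v => ¬ (X.G.div v = 4))).card := by
    rw [Finset.sum_congr rfl (fun v hv => hdisj v hv), Finset.sum_const, nsmul_eq_mul,
      mul_comm]
  rw [hs4, hs2] at hsum
  have hD4pos : 1 ≤ ((FFl X).filter (fun v => X.G.div v = 4)).card := by
    rcases Finset.eq_empty_or_nonempty ((FFl X).filter (fun v => X.G.div v = 4)) with he | hne
    · exfalso
      have hD40 : ((FFl X).filter (fun v => X.G.div v = 4)).card = 0 := by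
        rw [he]; rfl
      have hFF4 : ((FFl X).filter (fun v => ¬ (X.G.div v = 4))).card = 4 := by
        rw [hD40] at hsum
        have : (2:ℤ) * ((FFl X).filter (fun v => ¬ (X.G.div v = 4))).card = 8 := by
          push_cast at hsum ⊢
          linarith
        have h4 : (((FFl X).filter (fun v => ¬ (X.G.div v = 4))).card : ℤ) = 4 := by
          linarith
        exact_mod_cast h4
      have hEO := K.card_EO
      have hEOpos : 1 ≤ (EOl X).card := by omega
      obtain ⟨e, he'⟩ := Finset.card_pos.1 hEOpos
      have hstruct := K.EO_struct e he'
      have hmem : X.G.src e ∈ (FFl X).filter (fun v => X.G.div v = 4) :=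
        Finset.mem_filter.2 ⟨mem_FFl.2 hstruct.1, hstruct.2.2⟩
      rw [he] at hmem
      exact absurd hmem (Finset.notMem_empty _)
    · exact Finset.card_pos.2 hne
  have hle : ((FFl X).filter (fun v => X.G.div v = 4)).card ≤ 2 := by
    by_contra hc
    push_neg at hc
    have h3 : (3 : ℤ) ≤ ((FFl X).filter (fun v => X.G.div v = 4)).card := by
      exact_mod_cast hc
    have h0 : (0 : ℤ) ≤ 2 * (((FFl X).filter (fun v => ¬ (X.G.div v = 4))).card : ℤ) := by
      positivity
    push_cast at hsum
    linarith
  have hsum' : 4 * ((FFl X).filter (fun v => X.G.div v = 4)).card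
      + 2 * ((FFl X).filter (fun v => ¬ (X.G.div v = 4))).card = 8 := by
    exact_mod_cast hsum
  rcases Nat.lt_or_ge ((FFl X).filter (fun v => X.G.div v = 4)).card 2 with h | h
  · right
    have h1 : ((FFl X).filter (fun v => X.G.div v = 4)).card = 1 := by omega
    exact ⟨by omega, h1⟩
  · left
    have h2 : ((FFl X).filter (fun v => X.G.div v = 4)).card = 2 := by omega
    have hD20 : ((FFl X).filter (fun v => ¬ (X.G.div v = 4))).card = 0 := by omega
    refine ⟨by omega, ?_⟩
    intro v hv
    by_contra hc
    have : v ∈ (FFl X).filter (fun v => ¬ (X.G.div v = 4)) :=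
      Finset.mem_filter.2 ⟨hv, hc⟩
    rw [Finset.card_eq_zero] at hD20
    rw [hD20] at this
    exact absurd this (Finset.notMem_empty _)

end Common
end FD4
end Classify2

noncomputable section ClassifyA
namespace FD4
open WOGraph

variable {X : MarkedFD 6 0 4 (fun _ => 1) [1, 1] []}

abbrev i0 : Fin 5 := ⟨0, by norm_num⟩
abbrev i1 : Fin 5 := ⟨1, by norm_num⟩
abbrev i2 : Fin 5 := ⟨2, by norm_num⟩
abbrev i3 : Fin 5 := ⟨3, by norm_num⟩
abbrev i4 : Fin 5 := ⟨4, by norm_num⟩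

lemma mark_dup {i j : Fin 5} {y : Fin X.G.nV ⊕ Fin X.G.nE}
    (hi : X.m (Sum.inl i) = y) (hj : X.m (Sum.inl j) = y) (hij : i ≠ j) : False := by
  have h := X.marking.inj (hi.trans hj.symm)
  have h2 : (Sum.inl i : MD) = Sum.inl j := h
  exact hij (Sum.inl.inj h2)

/-- no edge of `Edge^∞` lies in the image of the `A₀`-marking -/
lemma no_marked_infEdge (X : MarkedFD 6 0 4 (fun _ => 1) [1, 1] []) :
    ∀ (i : Fin 5) (e : Fin X.G.nE), X.m (Sum.inl i) = Sum.inr e → ¬ X.G.InfEdge e := by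
  have h := X.marking.mu2_edges
  rw [Multiset.coe_nil] at h
  have h2 := Finset.val_eq_zero.1 (Multiset.map_eq_zero.1 h)
  intro i e hm hie
  have hmm : e ∈ (∅ : Finset (Fin X.G.nE)) := by
    rw [← h2]
    exact Finset.mem_filter.2 ⟨Finset.mem_univ _, hie, ⟨i, hm⟩⟩
  exact absurd hmm (Finset.notMem_empty _)

lemma complete_A (K : Common X) (hf2 : (FFl X).card = 2)
    (hall4 : ∀ v ∈ FFl X, X.G.div v = 4) :
    ∃ (SX : Finset (Fin 8)) (hc : SX.card ≤ 3), X.Equivalent (repA SX hc) := by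
  classical
  -- the unique non-infinite edge
  have hEO1 : (EOl X).card = 1 := by
    have := K.card_EO
    omega
  obtain ⟨e0, hEOeq⟩ := Finset.card_eq_one.1 hEO1
  have he0 : ¬ X.G.InfEdge e0 := by
    have : e0 ∈ EOl X := by rw [hEOeq]; exact Finset.mem_singleton_self _
    exact mem_EOl.1 this
  have hEO_mem : ∀ e, ¬ X.G.InfEdge e → e = e0 := by
    intro e he
    have : e ∈ EOl X := mem_EOl.2 he
    rw [hEOeq] at this
    exact Finset.mem_singleton.1 this
  set P := X.G.src e0 with hP
  set Q := X.G.tgt e0 with hQ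
  have hPQ : P ≠ Q := X.G.no_loop X.fd.acyclic e0
  obtain ⟨hPnin0, hQnin0, hdivP0⟩ := K.EO_struct e0 (mem_EOl.2 he0)
  have hPnin : ¬ X.G.InfVert P := hPnin0
  have hQnin : ¬ X.G.InfVert Q := hQnin0
  have hdivP : X.G.div P = 4 := hdivP0
  -- the set of floors is {P, Q}
  have hFF : ({P, Q} : Finset (Fin X.G.nV)) = FFl X := by
    apply Finset.eq_of_subset_of_card_le
    · intro v hv
      rcases Finset.mem_insert.1 hv with rfl | hv
      · exact mem_FFl.2 hPnin
      · rw [Finset.mem_singleton.1 hv]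
        exact mem_FFl.2 hQnin
    · rw [hf2, Finset.card_insert_of_notMem (by simpa using hPQ), Finset.card_singleton]
  have hFmem : ∀ v, ¬ X.G.InfVert v → v = P ∨ v = Q := by
    intro v hv
    have : v ∈ ({P, Q} : Finset (Fin X.G.nV)) := by rw [hFF]; exact mem_FFl.2 hv
    simpa using this
  -- the label set
  set SX := Finset.univ.filter (fun ℓ : Fin 8 => X.G.tgt (K.eu ℓ) = Q) with hSX
  have hsrcQ : ∀ e, X.G.src e ≠ Q := by
    intro e he
    by_cases hie : X.G.InfEdge e
    · obtain ⟨ℓ, rfl⟩ := (K.hinfEdge_iff e).1 hie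
      rw [K.hsrc ℓ] at he
      exact hQnin (by rw [← he]; exact K.hu_inf ℓ)
    · rw [hEO_mem e hie] at he
      exact hPQ he
  have hdivQ : X.G.div Q = 4 := hall4 Q (mem_FFl.2 hQnin)
  have hdform := K.div_tgt Q e0 rfl he0 hsrcQ (fun e he _ => hEO_mem e he)
  rw [hdivQ] at hdform
  have hwpos := X.G.w_pos e0
  have hcS : SX.card ≤ 3 := by
    rw [hSX]
    omega
  have hwe0 : X.G.w e0 = 4 - SX.card := by
    rw [hSX]
    omega
  -- targets of infinite edges are P or Q
  have hft : ∀ ℓ, X.G.tgt (K.eu ℓ) = P ∨ X.G.tgt (K.eu ℓ) = Q :=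
    fun ℓ => hFmem _ (K.tgt_not_inf _)
  -- pin down the markings 2, 3, 4
  have TPe : Relation.TransGen X.G.veStep (Sum.inl P) (Sum.inr e0) :=
    Relation.TransGen.single (show X.G.src e0 = P from rfl)
  have TeQ : Relation.TransGen X.G.veStep (Sum.inr e0) (Sum.inl Q) :=
    Relation.TransGen.single (show X.G.tgt e0 = Q from rfl)
  have TPQ : Relation.TransGen X.G.veStep (Sum.inl P) (Sum.inl Q) := TPe.trans TeQ
  have hval : ∀ i : Fin 5, ¬ (i.val < 2) → X.m (Sum.inl i) = Sum.inl P ∨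
      X.m (Sum.inl i) = Sum.inr e0 ∨ X.m (Sum.inl i) = Sum.inl Q := by
    intro i hi
    cases hxm : X.m (Sum.inl i) with
    | inl v =>
      have hnv : ¬ X.G.InfVert v := by
        intro hv
        exact hi ((X.marking.mu1_vert i).1 ⟨v, hv, hxm⟩)
      rcases hFmem v hnv with rfl | rfl
      · exact Or.inl rfl
      · exact Or.inr (Or.inr rfl)
    | inr e =>
      have hne : ¬ X.G.InfEdge e := no_marked_infEdge X i e hxm
      rw [hEO_mem e hne]
      exact Or.inr (Or.inl rfl)
  have hpin : X.m (Sum.inl i2) = Sum.inl P ∧ X.m (Sum.inl i3) = Sum.inr e0 ∧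
      X.m (Sum.inl i4) = Sum.inl Q := by
    rcases hval i2 (by norm_num) with h2 | h2 | h2 <;>
      rcases hval i3 (by norm_num) with h3 | h3 | h3 <;>
      rcases hval i4 (by norm_num) with h4 | h4 | h4 <;>
      first
      | exact ⟨h2, h3, h4⟩
      | exact (mark_dup h2 h3 (by decide)).elim
      | exact (mark_dup h2 h4 (by decide)).elim
      | exact (mark_dup h3 h4 (by decide)).elim
      | exact absurd (X.marking.incr i3 i2 (by rw [h3, h2]; exact TPe)) (by decide)
      | exact absurd (X.marking.incr i4 i2 (by rw [h4, h2]; exact TPe)) (by decide)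
      | exact absurd (X.marking.incr i3 i2 (by rw [h3, h2]; exact TPQ)) (by decide)
      | exact absurd (X.marking.incr i4 i2 (by rw [h4, h2]; exact TPQ)) (by decide)
      | exact absurd (X.marking.incr i4 i3 (by rw [h4, h3]; exact TPe)) (by decide)
      | exact absurd (X.marking.incr i4 i3 (by rw [h4, h3]; exact TPQ)) (by decide)
      | exact absurd (X.marking.incr i3 i2 (by rw [h3, h2]; exact TeQ)) (by decide)
      | exact absurd (X.marking.incr i4 i2 (by rw [h4, h2]; exact TeQ)) (by decide)
      | exact absurd (X.marking.incr i4 i3 (by rw [h4, h3]; exact TeQ)) (by decide)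
  obtain ⟨hm2, hm3, hm4⟩ := hpin
  -- the vertex and edge identifications
  set gV : Fin 10 → Fin X.G.nV := Fin.cons P (Fin.cons Q K.u) with hgV
  set gE : Fin 9 → Fin X.G.nE := Fin.cons e0 K.eu with hgE
  have hgV0 : gV 0 = P := rfl
  have hgV1 : gV 1 = Q := rfl
  have hgVlab : ∀ ℓ, gV (labA ℓ) = K.u ℓ := fun ℓ => rfl
  have hgE0 : gE 0 = e0 := rfl
  have hgEs : ∀ ℓ, gE ℓ.succ = K.eu ℓ := fun ℓ => rfl
  have hPu : ∀ ℓ, P ≠ K.u ℓ := fun ℓ h => hPnin (by rw [h]; exact K.hu_inf ℓ)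
  have hQu : ∀ ℓ, Q ≠ K.u ℓ := fun ℓ h => hQnin (by rw [h]; exact K.hu_inf ℓ)
  have hbV : Function.Bijective gV := by
    constructor
    · intro a b hab
      rcases vcaseA a with rfl | rfl | ⟨ℓ, rfl⟩ <;>
        rcases vcaseA b with rfl | rfl | ⟨ℓ', rfl⟩
      · rfl
      · rw [hgV0, hgV1] at hab; exact absurd hab hPQ
      · rw [hgV0, hgVlab] at hab; exact absurd hab (hPu ℓ')
      · rw [hgV0, hgV1] at hab; exact absurd hab.symm hPQ
      · rfl
      · rw [hgV1, hgVlab] at hab; exact absurd hab (hQu ℓ')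
      · rw [hgV0, hgVlab] at hab; exact absurd hab.symm (hPu ℓ)
      · rw [hgV1, hgVlab] at hab; exact absurd hab.symm (hQu ℓ)
      · rw [hgVlab, hgVlab] at hab
        rw [K.hu_inj hab]
    · intro v
      by_cases hv : X.G.InfVert v
      · obtain ⟨ℓ, rfl⟩ := (K.hinf_iff v).1 hv
        exact ⟨labA ℓ, rfl⟩
      · rcases hFmem v hv with rfl | rfl
        · exact ⟨0, rfl⟩
        · exact ⟨1, rfl⟩
  have he0u : ∀ ℓ, e0 ≠ K.eu ℓ := by
    intro ℓ h
    exact he0 ((K.hinfEdge_iff e0).2 ⟨ℓ, h⟩)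
  have hbE : Function.Bijective gE := by
    constructor
    · intro a b hab
      rcases ecaseA a with rfl | ⟨ℓ, rfl⟩ <;> rcases ecaseA b with rfl | ⟨ℓ', rfl⟩
      · rfl
      · rw [hgE0, hgEs] at hab; exact absurd hab (he0u ℓ')
      · rw [hgE0, hgEs] at hab; exact absurd hab.symm (he0u ℓ)
      · rw [hgEs, hgEs] at hab
        rw [K.heu_inj hab]
    · intro e
      by_cases hie : X.G.InfEdge e
      · obtain ⟨ℓ, rfl⟩ := (K.hinfEdge_iff e).1 hie
        exact ⟨ℓ.succ, rfl⟩
      · exact ⟨0, (hEO_mem e hie).symm⟩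
  set EV : Fin X.G.nV ≃ Fin 10 := (Equiv.ofBijective gV hbV).symm with hEV
  set EE : Fin X.G.nE ≃ Fin 9 := (Equiv.ofBijective gE hbE).symm with hEE
  have hEVg : ∀ k, EV (gV k) = k := fun k =>
    (Equiv.ofBijective gV hbV).symm_apply_apply k
  have hEEg : ∀ k, EE (gE k) = k := fun k =>
    (Equiv.ofBijective gE hbE).symm_apply_apply k
  have hgEV : ∀ v, gV (EV v) = v := fun v =>
    (Equiv.ofBijective gV hbV).apply_symm_apply v
  have hgEE : ∀ e, gE (EE e) = e := fun e =>
    (Equiv.ofBijective gE hbE).apply_symm_apply e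
  -- per-edge data transfer
  have hdata : ∀ k : Fin 9,
      X.G.src (gE k) = gV ((stdA SX hcS).src k) ∧
      X.G.tgt (gE k) = gV ((stdA SX hcS).tgt k) ∧
      X.G.w (gE k) = (stdA SX hcS).w k := by
    intro k
    refine Fin.cases ?_ (fun ℓ => ?_) k
    · refine ⟨rfl, rfl, ?_⟩
      rw [hgE0, stdA_w0, hwe0]
    · refine ⟨?_, ?_, ?_⟩
      · rw [hgEs, stdA_srcs, hgVlab, K.hsrc]
      · rw [hgEs, stdA_tgts]
        by_cases hm : ℓ ∈ SX
        · rw [if_pos hm, hgV1]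
          rw [hSX] at hm
          exact (Finset.mem_filter.1 hm).2
        · rw [if_neg hm, hgV0]
          rcases hft ℓ with h | h
          · exact h
          · exfalso
            exact hm (by rw [hSX]; exact Finset.mem_filter.2 ⟨Finset.mem_univ _, h⟩)
      · rw [hgEs, stdA_ws]
        exact K.hw1 ℓ
  refine ⟨SX, hcS, EV, EE, Equiv.refl _, ?_, ?_, ?_, fun i => rfl, fun i p => ⟨p, rfl⟩, ?_⟩
  · intro e
    have h1 : X.G.src e = gV ((stdA SX hcS).src (EE e)) := by
      conv_lhs => rw [← hgEE e]
      exact (hdata (EE e)).1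
    rw [h1]
    exact (hEVg _).symm
  · intro e
    have h1 : X.G.tgt e = gV ((stdA SX hcS).tgt (EE e)) := by
      conv_lhs => rw [← hgEE e]
      exact (hdata (EE e)).2.1
    rw [h1]
    exact (hEVg _).symm
  · intro e
    conv_rhs => rw [← hgEE e]
    exact ((hdata (EE e)).2.2).symm
  · -- the marking condition
    intro p
    show (repA SX hcS).m p = Sum.map EV EE (X.m p)
    match p with
    | Sum.inl i =>
      fin_cases i
      · have h := K.hu_m 0
        have h' : X.m (Sum.inl i0) = Sum.inl (K.u 0) := h
        rw [h']
        show Sum.inl (labA 0) = Sum.map EV EE (Sum.inl (K.u 0))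
        rw [Sum.map_inl, ← hgVlab 0, hEVg]
      · have h := K.hu_m 1
        have h' : X.m (Sum.inl i1) = Sum.inl (K.u 1) := h
        rw [h']
        show Sum.inl (labA 1) = Sum.map EV EE (Sum.inl (K.u 1))
        rw [Sum.map_inl, ← hgVlab 1, hEVg]
      · rw [show X.m (Sum.inl i2) = Sum.inl P from hm2]
        show Sum.inl (0 : Fin 10) = Sum.map EV EE (Sum.inl P)
        rw [Sum.map_inl, ← hgV0, hEVg]
      · rw [show X.m (Sum.inl i3) = Sum.inr e0 from hm3]
        show Sum.inr (0 : Fin 9) = Sum.map EV EE (Sum.inr e0)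
        rw [Sum.map_inr, ← hgE0, hEEg]
      · rw [show X.m (Sum.inl i4) = Sum.inl Q from hm4]
        show Sum.inl (1 : Fin 10) = Sum.map EV EE (Sum.inl Q)
        rw [Sum.map_inl, ← hgV1, hEVg]
    | Sum.inr ⟨i, pp⟩ =>
      have hp0 : pp = ⟨0, by norm_num⟩ := Fin.ext (Nat.lt_one_iff.1 pp.isLt)
      subst hp0
      set ℓ : Fin 8 := ⟨i.val + 2, by omega⟩ with hℓ
      have hmk : mark ℓ = Sum.inr ⟨i, ⟨0, by norm_num⟩⟩ := by
        rw [mark, dif_neg (by simp [hℓ] : ¬ (ℓ.val < 2))]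
        have h6 : (⟨ℓ.val - 2, by omega⟩ : Fin 6) = i := Fin.ext (by simp [hℓ])
        rw [h6]
        rfl
      have h := K.hu_m ℓ
      rw [hmk] at h
      rw [h]
      show Sum.inl (labA (labIdx i)) = Sum.map EV EE (Sum.inl (K.u ℓ))
      rw [Sum.map_inl, ← hgVlab ℓ, hEVg]
      rfl

end FD4
end ClassifyA

noncomputable section ClassifyB
namespace FD4
open WOGraph

variable {X : MarkedFD 6 0 4 (fun _ => 1) [1, 1] []}

lemma complete_B_aux (K : Common X) (Fc : Fin X.G.nV) (e1 e2 : Fin X.G.nE)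
    (hFc_nin : ¬ X.G.InfVert Fc)
    (hne12 : e1 ≠ e2)
    (h1inf : ¬ X.G.InfEdge e1) (h2inf : ¬ X.G.InfEdge e2)
    (hsrc1 : X.G.src e1 = Fc) (hsrc2 : X.G.src e2 = Fc)
    (hEO_mem : ∀ e, ¬ X.G.InfEdge e → e = e1 ∨ e = e2)
    (hT12 : X.G.tgt e1 ≠ X.G.tgt e2)
    (hdiv2 : ∀ v, ¬ X.G.InfVert v → v ≠ Fc → X.G.div v = 2)
    (hf3 : (FFl X).card = 3)
    (hm2 : X.m (Sum.inl i2) = Sum.inl Fc)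
    (hm3 : X.m (Sum.inl i3) = Sum.inr e1)
    (hm4 : X.m (Sum.inl i4) = Sum.inr e2) :
    ∃ (S1 S2 : Finset (Fin 8)) (hc1 : S1.card ≤ 1) (hc2 : S2.card ≤ 1)
      (hdj : Disjoint S1 S2), X.Equivalent (repB S1 S2 hc1 hc2 hdj) := by
  classical
  set T1 := X.G.tgt e1 with hT1
  set T2 := X.G.tgt e2 with hT2
  have hT1nin : ¬ X.G.InfVert T1 := K.tgt_not_inf e1
  have hT2nin : ¬ X.G.InfVert T2 := K.tgt_not_inf e2
  have hT1Fc : T1 ≠ Fc := by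
    intro h
    exact X.G.no_loop X.fd.acyclic e1 (by rw [hsrc1, ← h])
  have hT2Fc : T2 ≠ Fc := by
    intro h
    exact X.G.no_loop X.fd.acyclic e2 (by rw [hsrc2, ← h])
  have hdivT1 : X.G.div T1 = 2 := hdiv2 T1 hT1nin hT1Fc
  have hdivT2 : X.G.div T2 = 2 := hdiv2 T2 hT2nin hT2Fc
  have hFF : ({Fc, T1, T2} : Finset (Fin X.G.nV)) = FFl X := by
    apply Finset.eq_of_subset_of_card_le
    · intro v hv
      rcases Finset.mem_insert.1 hv with rfl | hv
      · exact mem_FFl.2 hFc_nin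
      · rcases Finset.mem_insert.1 hv with rfl | hv
        · exact mem_FFl.2 hT1nin
        · rw [Finset.mem_singleton.1 hv]
          exact mem_FFl.2 hT2nin
    · rw [hf3,
        Finset.card_insert_of_notMem (by
          simp only [Finset.mem_insert, Finset.mem_singleton]
          push_neg
          exact ⟨hT1Fc.symm, hT2Fc.symm⟩),
        Finset.card_insert_of_notMem (by simpa using hT12),
        Finset.card_singleton]
  have hFmem : ∀ v, ¬ X.G.InfVert v → v = Fc ∨ v = T1 ∨ v = T2 := by
    intro v hv
    have : v ∈ ({Fc, T1, T2} : Finset (Fin X.G.nV)) := by rw [hFF]; exact mem_FFl.2 hv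
    simpa using this
  set S1 := Finset.univ.filter (fun ℓ : Fin 8 => X.G.tgt (K.eu ℓ) = T1) with hS1
  set S2 := Finset.univ.filter (fun ℓ : Fin 8 => X.G.tgt (K.eu ℓ) = T2) with hS2
  have hsrcT : ∀ j : Fin X.G.nV, ¬ X.G.InfVert j → j ≠ Fc → (∀ e, X.G.src e ≠ j) := by
    intro j hjn hj e he
    by_cases hie : X.G.InfEdge e
    · obtain ⟨ℓ, rfl⟩ := (K.hinfEdge_iff e).1 hie
      rw [K.hsrc ℓ] at he
      exact hjn (by rw [← he]; exact K.hu_inf ℓ)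
    · rcases hEO_mem e hie with rfl | rfl
      · rw [hsrc1] at he; exact hj he.symm
      · rw [hsrc2] at he; exact hj he.symm
  have honly1 : ∀ e, ¬ X.G.InfEdge e → X.G.tgt e = T1 → e = e1 := by
    intro e hie ht
    rcases hEO_mem e hie with rfl | rfl
    · rfl
    · exact absurd ht.symm hT12
  have honly2 : ∀ e, ¬ X.G.InfEdge e → X.G.tgt e = T2 → e = e2 := by
    intro e hie ht
    rcases hEO_mem e hie with rfl | rfl
    · exact absurd ht hT12
    · rfl
  have hd1 := K.div_tgt T1 e1 rfl h1inf (hsrcT T1 hT1nin hT1Fc) honly1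
  have hd2 := K.div_tgt T2 e2 rfl h2inf (hsrcT T2 hT2nin hT2Fc) honly2
  rw [hdivT1] at hd1
  rw [hdivT2] at hd2
  have hw1pos := X.G.w_pos e1
  have hw2pos := X.G.w_pos e2
  have hc1 : S1.card ≤ 1 := by rw [hS1]; omega
  have hc2 : S2.card ≤ 1 := by rw [hS2]; omega
  have hwe1 : X.G.w e1 = 2 - S1.card := by rw [hS1]; omega
  have hwe2 : X.G.w e2 = 2 - S2.card := by rw [hS2]; omega
  have hdj : Disjoint S1 S2 := by
    rw [Finset.disjoint_left]
    intro ℓ hℓ1 hℓ2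
    rw [hS1, Finset.mem_filter] at hℓ1
    rw [hS2, Finset.mem_filter] at hℓ2
    exact hT12 (hℓ1.2 ▸ hℓ2.2 ▸ rfl)
  have hft : ∀ ℓ, X.G.tgt (K.eu ℓ) = Fc ∨ X.G.tgt (K.eu ℓ) = T1 ∨ X.G.tgt (K.eu ℓ) = T2 :=
    fun ℓ => hFmem _ (K.tgt_not_inf _)
  -- vertex and edge identifications
  set gV : Fin 11 → Fin X.G.nV := Fin.cons Fc (Fin.cons T1 (Fin.cons T2 K.u)) with hgV
  set gE : Fin 10 → Fin X.G.nE := Fin.cons e1 (Fin.cons e2 K.eu) with hgE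
  have hgV0 : gV 0 = Fc := rfl
  have hgV1 : gV 1 = T1 := rfl
  have hgV2 : gV 2 = T2 := rfl
  have hgVlab : ∀ ℓ, gV (labB ℓ) = K.u ℓ := fun ℓ => rfl
  have hgE0 : gE 0 = e1 := rfl
  have hgE1 : gE 1 = e2 := rfl
  have hgEs : ∀ ℓ, gE ℓ.succ.succ = K.eu ℓ := fun ℓ => rfl
  have hFcu : ∀ ℓ, Fc ≠ K.u ℓ := fun ℓ h => hFc_nin (by rw [h]; exact K.hu_inf ℓ)
  have hT1u : ∀ ℓ, T1 ≠ K.u ℓ := fun ℓ h => hT1nin (by rw [h]; exact K.hu_inf ℓ)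
  have hT2u : ∀ ℓ, T2 ≠ K.u ℓ := fun ℓ h => hT2nin (by rw [h]; exact K.hu_inf ℓ)
  have hbV : Function.Bijective gV := by
    constructor
    · intro a b hab
      rcases vcaseB a with rfl | rfl | rfl | ⟨ℓ, rfl⟩ <;>
        rcases vcaseB b with rfl | rfl | rfl | ⟨ℓ', rfl⟩
      · rfl
      · rw [hgV0, hgV1] at hab; exact absurd hab.symm hT1Fc
      · rw [hgV0, hgV2] at hab; exact absurd hab.symm hT2Fc
      · rw [hgV0, hgVlab] at hab; exact absurd hab (hFcu ℓ')
      · rw [hgV0, hgV1] at hab; exact absurd hab hT1Fc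
      · rfl
      · rw [hgV1, hgV2] at hab; exact absurd hab hT12
      · rw [hgV1, hgVlab] at hab; exact absurd hab (hT1u ℓ')
      · rw [hgV0, hgV2] at hab; exact absurd hab hT2Fc
      · rw [hgV1, hgV2] at hab; exact absurd hab.symm hT12
      · rfl
      · rw [hgV2, hgVlab] at hab; exact absurd hab (hT2u ℓ')
      · rw [hgV0, hgVlab] at hab; exact absurd hab.symm (hFcu ℓ)
      · rw [hgV1, hgVlab] at hab; exact absurd hab.symm (hT1u ℓ)
      · rw [hgV2, hgVlab] at hab; exact absurd hab.symm (hT2u ℓ)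
      · rw [hgVlab, hgVlab] at hab
        rw [K.hu_inj hab]
    · intro v
      by_cases hv : X.G.InfVert v
      · obtain ⟨ℓ, rfl⟩ := (K.hinf_iff v).1 hv
        exact ⟨labB ℓ, rfl⟩
      · rcases hFmem v hv with rfl | rfl | rfl
        · exact ⟨0, rfl⟩
        · exact ⟨1, rfl⟩
        · exact ⟨2, rfl⟩
  have he1u : ∀ ℓ, e1 ≠ K.eu ℓ := fun ℓ h => h1inf ((K.hinfEdge_iff e1).2 ⟨ℓ, h⟩)
  have he2u : ∀ ℓ, e2 ≠ K.eu ℓ := fun ℓ h => h2inf ((K.hinfEdge_iff e2).2 ⟨ℓ, h⟩)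
  have hbE : Function.Bijective gE := by
    constructor
    · intro a b hab
      rcases ecaseB a with rfl | rfl | ⟨ℓ, rfl⟩ <;>
        rcases ecaseB b with rfl | rfl | ⟨ℓ', rfl⟩
      · rfl
      · rw [hgE0, hgE1] at hab; exact absurd hab hne12
      · rw [hgE0, hgEs] at hab; exact absurd hab (he1u ℓ')
      · rw [hgE0, hgE1] at hab; exact absurd hab.symm hne12
      · rfl
      · rw [hgE1, hgEs] at hab; exact absurd hab (he2u ℓ')
      · rw [hgE0, hgEs] at hab; exact absurd hab.symm (he1u ℓ)
      · rw [hgE1, hgEs] at hab; exact absurd hab.symm (he2u ℓ)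
      · rw [hgEs, hgEs] at hab
        rw [K.heu_inj hab]
    · intro e
      by_cases hie : X.G.InfEdge e
      · obtain ⟨ℓ, rfl⟩ := (K.hinfEdge_iff e).1 hie
        exact ⟨ℓ.succ.succ, rfl⟩
      · rcases hEO_mem e hie with rfl | rfl
        · exact ⟨0, rfl⟩
        · exact ⟨1, rfl⟩
  set EV : Fin X.G.nV ≃ Fin 11 := (Equiv.ofBijective gV hbV).symm with hEV
  set EE : Fin X.G.nE ≃ Fin 10 := (Equiv.ofBijective gE hbE).symm with hEE
  have hEVg : ∀ k, EV (gV k) = k := fun k =>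
    (Equiv.ofBijective gV hbV).symm_apply_apply k
  have hEEg : ∀ k, EE (gE k) = k := fun k =>
    (Equiv.ofBijective gE hbE).symm_apply_apply k
  have hgEE : ∀ e, gE (EE e) = e := fun e =>
    (Equiv.ofBijective gE hbE).apply_symm_apply e
  have hdata : ∀ k : Fin 10,
      X.G.src (gE k) = gV ((stdB S1 S2 hc1 hc2 hdj).src k) ∧
      X.G.tgt (gE k) = gV ((stdB S1 S2 hc1 hc2 hdj).tgt k) ∧
      X.G.w (gE k) = (stdB S1 S2 hc1 hc2 hdj).w k := by
    intro k
    rcases ecaseB k with rfl | rfl | ⟨ℓ, rfl⟩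
    · exact ⟨hsrc1, rfl, by rw [hgE0, stdB_w0, hwe1]⟩
    · exact ⟨hsrc2, rfl, by rw [hgE1, stdB_w1, hwe2]⟩
    · refine ⟨K.hsrc ℓ, ?_, K.hw1 ℓ⟩
      rw [hgEs, stdB_tgts]
      by_cases hm1 : ℓ ∈ S1
      · rw [if_pos hm1, hgV1]
        rw [hS1] at hm1
        exact (Finset.mem_filter.1 hm1).2
      · rw [if_neg hm1]
        by_cases hm2' : ℓ ∈ S2
        · rw [if_pos hm2', hgV2]
          rw [hS2] at hm2'
          exact (Finset.mem_filter.1 hm2').2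
        · rw [if_neg hm2', hgV0]
          rcases hft ℓ with h | h | h
          · exact h
          · exact absurd (by rw [hS1]; exact Finset.mem_filter.2 ⟨Finset.mem_univ _, h⟩) hm1
          · exact absurd (by rw [hS2]; exact Finset.mem_filter.2 ⟨Finset.mem_univ _, h⟩) hm2'
  refine ⟨S1, S2, hc1, hc2, hdj, EV, EE, Equiv.refl _, ?_, ?_, ?_, fun i => rfl,
    fun i p => ⟨p, rfl⟩, ?_⟩
  · intro e
    have h1 : X.G.src e = gV ((stdB S1 S2 hc1 hc2 hdj).src (EE e)) := by
      conv_lhs => rw [← hgEE e]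
      exact (hdata (EE e)).1
    rw [h1]
    exact (hEVg _).symm
  · intro e
    have h1 : X.G.tgt e = gV ((stdB S1 S2 hc1 hc2 hdj).tgt (EE e)) := by
      conv_lhs => rw [← hgEE e]
      exact (hdata (EE e)).2.1
    rw [h1]
    exact (hEVg _).symm
  · intro e
    conv_rhs => rw [← hgEE e]
    exact ((hdata (EE e)).2.2).symm
  · intro p
    show (repB S1 S2 hc1 hc2 hdj).m p = Sum.map EV EE (X.m p)
    match p with
    | Sum.inl i =>
      fin_cases i
      · have h' : X.m (Sum.inl i0) = Sum.inl (K.u 0) := K.hu_m 0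
        rw [h']
        show Sum.inl (labB 0) = Sum.map EV EE (Sum.inl (K.u 0))
        rw [Sum.map_inl, ← hgVlab 0, hEVg]
      · have h' : X.m (Sum.inl i1) = Sum.inl (K.u 1) := K.hu_m 1
        rw [h']
        show Sum.inl (labB 1) = Sum.map EV EE (Sum.inl (K.u 1))
        rw [Sum.map_inl, ← hgVlab 1, hEVg]
      · rw [show X.m (Sum.inl i2) = Sum.inl Fc from hm2]
        show Sum.inl (0 : Fin 11) = Sum.map EV EE (Sum.inl Fc)
        rw [Sum.map_inl, ← hgV0, hEVg]
      · rw [show X.m (Sum.inl i3) = Sum.inr e1 from hm3]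
        show Sum.inr (0 : Fin 10) = Sum.map EV EE (Sum.inr e1)
        rw [Sum.map_inr, ← hgE0, hEEg]
      · rw [show X.m (Sum.inl i4) = Sum.inr e2 from hm4]
        show Sum.inr (1 : Fin 10) = Sum.map EV EE (Sum.inr e2)
        rw [Sum.map_inr, ← hgE1, hEEg]
    | Sum.inr ⟨i, pp⟩ =>
      have hp0 : pp = ⟨0, by norm_num⟩ := Fin.ext (Nat.lt_one_iff.1 pp.isLt)
      subst hp0
      set ℓ : Fin 8 := ⟨i.val + 2, by omega⟩ with hℓ
      have hmk : mark ℓ = Sum.inr ⟨i, ⟨0, by norm_num⟩⟩ := by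
        rw [mark, dif_neg (by simp [hℓ] : ¬ (ℓ.val < 2))]
        have h6 : (⟨ℓ.val - 2, by omega⟩ : Fin 6) = i := Fin.ext (by simp [hℓ])
        rw [h6]
        rfl
      have h := K.hu_m ℓ
      rw [hmk] at h
      rw [h]
      show Sum.inl (labB (labIdx i)) = Sum.map EV EE (Sum.inl (K.u ℓ))
      rw [Sum.map_inl, ← hgVlab ℓ, hEVg]
      rfl

end FD4
end ClassifyB

noncomputable section ClassifyB2
namespace FD4
open WOGraph

variable {X : MarkedFD 6 0 4 (fun _ => 1) [1, 1] []}

lemma complete_B (K : Common X) (hf3 : (FFl X).card = 3)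
    (hone : ((FFl X).filter (fun v => X.G.div v = 4)).card = 1) :
    ∃ (S1 S2 : Finset (Fin 8)) (hc1 : S1.card ≤ 1) (hc2 : S2.card ≤ 1)
      (hdj : Disjoint S1 S2), X.Equivalent (repB S1 S2 hc1 hc2 hdj) := by
  classical
  obtain ⟨Fc, hFcEq⟩ := Finset.card_eq_one.1 hone
  have hFc_mem : Fc ∈ (FFl X).filter (fun v => X.G.div v = 4) := by
    rw [hFcEq]; exact Finset.mem_singleton_self _
  have hFc_nin : ¬ X.G.InfVert Fc := mem_FFl.1 (Finset.mem_filter.1 hFc_mem).1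
  have hFc_div : X.G.div Fc = 4 := (Finset.mem_filter.1 hFc_mem).2
  have hD4uniq : ∀ v, ¬ X.G.InfVert v → X.G.div v = 4 → v = Fc := by
    intro v hv h4
    have : v ∈ (FFl X).filter (fun v => X.G.div v = 4) :=
      Finset.mem_filter.2 ⟨mem_FFl.2 hv, h4⟩
    rw [hFcEq] at this
    exact Finset.mem_singleton.1 this
  have hdiv2 : ∀ v, ¬ X.G.InfVert v → v ≠ Fc → X.G.div v = 2 := by
    intro v hv hvFc
    rcases X.fd.div_floor v hv with h | h
    · exact h
    · exact absurd (hD4uniq v hv h) hvFc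
  -- the two non-infinite edges
  have hEO2 : (EOl X).card = 2 := by
    have := K.card_EO
    omega
  obtain ⟨ea, eb, hab, hEOeq⟩ := Finset.card_eq_two.1 hEO2
  have hea : ¬ X.G.InfEdge ea := by
    have : ea ∈ EOl X := by rw [hEOeq]; simp
    exact mem_EOl.1 this
  have heb : ¬ X.G.InfEdge eb := by
    have : eb ∈ EOl X := by rw [hEOeq]; simp
    exact mem_EOl.1 this
  have hEO_mem : ∀ e, ¬ X.G.InfEdge e → e = ea ∨ e = eb := by
    intro e he
    have : e ∈ EOl X := mem_EOl.2 he
    rw [hEOeq] at this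
    simpa using this
  have hsrca : X.G.src ea = Fc := by
    have h := K.EO_struct ea (mem_EOl.2 hea)
    exact hD4uniq _ h.1 h.2.2
  have hsrcb : X.G.src eb = Fc := by
    have h := K.EO_struct eb (mem_EOl.2 heb)
    exact hD4uniq _ h.1 h.2.2
  -- the targets are distinct (connectivity)
  have htne : X.G.tgt ea ≠ X.G.tgt eb := by
    intro hc
    set Sf := X.G.tgt ea with hSf
    have hSfnin : ¬ X.G.InfVert Sf := K.tgt_not_inf ea
    have hSfFc : Sf ≠ Fc := by
      intro h
      exact X.G.no_loop X.fd.acyclic ea (by rw [hsrca, ← h])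
    -- a third floor exists
    have hnot_sub : ¬ (FFl X ⊆ {Fc, Sf}) := by
      intro hsub
      have hle := Finset.card_le_card hsub
      rw [hf3] at hle
      have hcard2 : ({Fc, Sf} : Finset (Fin X.G.nV)).card ≤ 2 :=
        Finset.card_insert_le _ _ |>.trans (by simp)
      omega
    obtain ⟨S', hS'mem, hS'nm⟩ := Finset.not_subset.1 hnot_sub
    have hS'nin : ¬ X.G.InfVert S' := mem_FFl.1 hS'mem
    have hS'Fc : S' ≠ Fc := fun h => hS'nm (by simp [h])
    have hS'Sf : S' ≠ Sf := fun h => hS'nm (by simp [h])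
    -- component predicate
    set Pp : Fin X.G.nV → Prop :=
      fun v => v = S' ∨ ∃ ℓ, K.u ℓ = v ∧ X.G.tgt (K.eu ℓ) = S' with hPp
    have hcl : ∀ e, Pp (X.G.src e) ↔ Pp (X.G.tgt e) := by
      intro e
      by_cases hie : X.G.InfEdge e
      · obtain ⟨ℓ, rfl⟩ := (K.hinfEdge_iff e).1 hie
        rw [K.hsrc ℓ]
        constructor
        · rintro (h | ⟨ℓ', hℓ', ht'⟩)
          · exact absurd (show X.G.InfVert S' by rw [← h]; exact K.hu_inf ℓ) hS'nin
          · exact Or.inl (by rw [← K.hu_inj hℓ']; exact ht')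
        · rintro (h | ⟨ℓ', hℓ', ht'⟩)
          · exact Or.inr ⟨ℓ, rfl, h⟩
          · exact absurd (show X.G.InfVert (X.G.tgt (K.eu ℓ)) by
                rw [← hℓ']; exact K.hu_inf ℓ') (K.tgt_not_inf _)
      · have hsrcFc : X.G.src e = Fc := by
          rcases hEO_mem e hie with rfl | rfl
          · exact hsrca
          · exact hsrcb
        have htgtSf : X.G.tgt e = Sf := by
          rcases hEO_mem e hie with rfl | rfl
          · exact hSf.symm
          · exact hc.symm
        rw [hsrcFc, htgtSf]
        apply iff_of_false
        · rintro (h | ⟨ℓ, hℓ, -⟩)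
          · exact hS'Fc h.symm
          · exact hFc_nin (by rw [← hℓ]; exact K.hu_inf ℓ)
        · rintro (h | ⟨ℓ, hℓ, -⟩)
          · exact hS'Sf h.symm
          · exact hSfnin (by rw [← hℓ]; exact K.hu_inf ℓ)
    have hPFc : Pp Fc := X.G.connected_all X.fd.conn hcl (Or.inl rfl)
    rcases hPFc with h | ⟨ℓ, hℓ, -⟩
    · exact hS'Fc h.symm
    · exact hFc_nin (by rw [← hℓ]; exact K.hu_inf ℓ)
  -- pin down the marks
  have TFa : Relation.TransGen X.G.veStep (Sum.inl Fc) (Sum.inr ea) :=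
    Relation.TransGen.single (show X.G.src ea = Fc from hsrca)
  have TFb : Relation.TransGen X.G.veStep (Sum.inl Fc) (Sum.inr eb) :=
    Relation.TransGen.single (show X.G.src eb = Fc from hsrcb)
  have hval : ∀ i : Fin 5, ¬ (i.val < 2) → X.m (Sum.inl i) = Sum.inl Fc ∨
      X.m (Sum.inl i) = Sum.inr ea ∨ X.m (Sum.inl i) = Sum.inr eb := by
    intro i hi
    cases hxm : X.m (Sum.inl i) with
    | inl v =>
      have hnv : ¬ X.G.InfVert v := by
        intro hv
        exact hi ((X.marking.mu1_vert i).1 ⟨v, hv, hxm⟩)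
      have hvFc : v = Fc := by
        by_contra hvFc
        exact X.marking.no_floor_one v hnv (hdiv2 v hnv hvFc) (Sum.inl i) hxm
      exact Or.inl (by rw [hvFc])
    | inr e =>
      have hne : ¬ X.G.InfEdge e := no_marked_infEdge X i e hxm
      rcases hEO_mem e hne with rfl | rfl
      · exact Or.inr (Or.inl rfl)
      · exact Or.inr (Or.inr rfl)
  have hpin : X.m (Sum.inl i2) = Sum.inl Fc ∧
      ((X.m (Sum.inl i3) = Sum.inr ea ∧ X.m (Sum.inl i4) = Sum.inr eb) ∨
       (X.m (Sum.inl i3) = Sum.inr eb ∧ X.m (Sum.inl i4) = Sum.inr ea)) := by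
    rcases hval i2 (by norm_num) with h2 | h2 | h2 <;>
      rcases hval i3 (by norm_num) with h3 | h3 | h3 <;>
      rcases hval i4 (by norm_num) with h4 | h4 | h4 <;>
      first
      | exact ⟨h2, Or.inl ⟨h3, h4⟩⟩
      | exact ⟨h2, Or.inr ⟨h3, h4⟩⟩
      | exact (mark_dup h2 h3 (by decide)).elim
      | exact (mark_dup h2 h4 (by decide)).elim
      | exact (mark_dup h3 h4 (by decide)).elim
      | exact absurd (X.marking.incr i3 i2 (by rw [h3, h2]; exact TFa)) (by decide)
      | exact absurd (X.marking.incr i3 i2 (by rw [h3, h2]; exact TFb)) (by decide)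
      | exact absurd (X.marking.incr i4 i2 (by rw [h4, h2]; exact TFa)) (by decide)
      | exact absurd (X.marking.incr i4 i2 (by rw [h4, h2]; exact TFb)) (by decide)
      | exact absurd (X.marking.incr i4 i3 (by rw [h4, h3]; exact TFa)) (by decide)
      | exact absurd (X.marking.incr i4 i3 (by rw [h4, h3]; exact TFb)) (by decide)
  obtain ⟨hm2, hrest⟩ := hpin
  rcases hrest with ⟨hm3, hm4⟩ | ⟨hm3, hm4⟩
  · exact complete_B_aux K Fc ea eb hFc_nin hab hea heb hsrca hsrcb hEO_mem htne hdiv2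
      hf3 hm2 hm3 hm4
  · exact complete_B_aux K Fc eb ea hFc_nin (Ne.symm hab) heb hea hsrcb hsrca
      (fun e he => (hEO_mem e he).symm) (Ne.symm htne) hdiv2 hf3 hm2 hm3 hm4

end FD4
end ClassifyB2

noncomputable section FinalPart
namespace FD4
open WOGraph

lemma repA_inj {S S' : Finset (Fin 8)} {hS : S.card ≤ 3} {hS' : S'.card ≤ 3}
    (h : (repA S hS).Equivalent (repA S' hS')) : S = S' := by
  obtain ⟨φV, φE, ψ, hsrc, htgt, hw, hψl, hψr, hm⟩ := h
  have hψ := MarkedFD.psi_fix ψ hψl hψr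
  have hmm : ∀ p, mA p = Sum.map φV φE (mA p) := by
    intro p
    have := hm p
    rw [show ψ p = p from hψ p] at this
    exact this
  have hφV0 : φV 0 = 0 := by
    have := hmm (Sum.inl i2)
    exact (Sum.inl.inj this).symm
  have hφV1 : φV 1 = 1 := by
    have := hmm (Sum.inl i4)
    exact (Sum.inl.inj this).symm
  have hφlab : ∀ ℓ : Fin 8, φV (labA ℓ) = labA ℓ := by
    intro ℓ
    have h1 := hmm (mark ℓ)
    rw [mA_mark] at h1
    exact (Sum.inl.inj h1).symm
  have hφE : ∀ ℓ : Fin 8, φE ℓ.succ = ℓ.succ := by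
    intro ℓ
    have h1 := hsrc ℓ.succ
    rw [stdA_srcs (S := S) (hS := hS), hφlab] at h1
    exact stdA_src_eq_lab (S := S') (hS := hS') h1
  ext ℓ
  have h1 := htgt ℓ.succ
  rw [hφE, stdA_tgts (S := S') (hS := hS'), stdA_tgts (S := S) (hS := hS)] at h1
  constructor
  · intro hmem
    rw [if_pos hmem, hφV1] at h1
    by_contra hmem'
    rw [if_neg hmem'] at h1
    exact absurd (congrArg Fin.val h1) (by simp)
  · intro hmem'
    rw [if_pos hmem'] at h1
    by_contra hmem
    rw [if_neg hmem, hφV0] at h1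
    exact absurd (congrArg Fin.val h1) (by simp)

lemma repB_inj {S1 S2 S1' S2' : Finset (Fin 8)} {h1 : S1.card ≤ 1} {h2 : S2.card ≤ 1}
    {hd : Disjoint S1 S2} {h1' : S1'.card ≤ 1} {h2' : S2'.card ≤ 1}
    {hd' : Disjoint S1' S2'}
    (h : (repB S1 S2 h1 h2 hd).Equivalent (repB S1' S2' h1' h2' hd')) :
    S1 = S1' ∧ S2 = S2' := by
  obtain ⟨φV, φE, ψ, hsrc, htgt, hw, hψl, hψr, hm⟩ := h
  have hψ := MarkedFD.psi_fix ψ hψl hψr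
  have hmm : ∀ p, mB p = Sum.map φV φE (mB p) := by
    intro p
    have := hm p
    rw [show ψ p = p from hψ p] at this
    exact this
  have hφV0 : φV 0 = 0 := (Sum.inl.inj (hmm (Sum.inl i2))).symm
  have hφE0 : φE 0 = 0 := (Sum.inr.inj (hmm (Sum.inl i3))).symm
  have hφE1 : φE 1 = 1 := (Sum.inr.inj (hmm (Sum.inl i4))).symm
  have hφV1 : φV 1 = 1 := by
    have h1t := htgt (0 : Fin 10)
    rw [hφE0, stdB_tgt0 (S1 := S1') (S2 := S2') (h1 := h1') (h2 := h2') (hd := hd'),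
      stdB_tgt0 (S1 := S1) (S2 := S2) (h1 := h1) (h2 := h2) (hd := hd)] at h1t
    exact h1t.symm
  have hφV2 : φV 2 = 2 := by
    have h1t := htgt (1 : Fin 10)
    rw [hφE1, stdB_tgt1 (S1 := S1') (S2 := S2') (h1 := h1') (h2 := h2') (hd := hd'),
      stdB_tgt1 (S1 := S1) (S2 := S2) (h1 := h1) (h2 := h2) (hd := hd)] at h1t
    exact h1t.symm
  have hφlab : ∀ ℓ : Fin 8, φV (labB ℓ) = labB ℓ := by
    intro ℓ
    have hx := hmm (mark ℓ)
    rw [mB_mark] at hx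
    exact (Sum.inl.inj hx).symm
  have hφE : ∀ ℓ : Fin 8, φE ℓ.succ.succ = ℓ.succ.succ := by
    intro ℓ
    have hx := hsrc ℓ.succ.succ
    rw [stdB_srcs (S1 := S1) (S2 := S2) (h1 := h1) (h2 := h2) (hd := hd), hφlab] at hx
    exact stdB_src_eq_lab (S1 := S1') (S2 := S2') (h1 := h1') (h2 := h2') (hd := hd') hx
  have key : ∀ ℓ : Fin 8,
      (if ℓ ∈ S1' then (1 : Fin 11) else if ℓ ∈ S2' then 2 else 0)
      = φV (if ℓ ∈ S1 then (1 : Fin 11) else if ℓ ∈ S2 then 2 else 0) := by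
    intro ℓ
    have hx := htgt ℓ.succ.succ
    rw [hφE, stdB_tgts (S1 := S1') (S2 := S2') (h1 := h1') (h2 := h2') (hd := hd'),
      stdB_tgts (S1 := S1) (S2 := S2) (h1 := h1) (h2 := h2) (hd := hd)] at hx
    exact hx
  have hval2 : ∀ ℓ : Fin 8, (ℓ ∈ S1 ↔ ℓ ∈ S1') ∧ (ℓ ∈ S2 ↔ ℓ ∈ S2') := by
    intro ℓ
    have hx := key ℓ
    by_cases a : ℓ ∈ S1
    · have bf : ℓ ∉ S2 := fun hb => (Finset.disjoint_left.1 hd) a hb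
      rw [if_pos a, hφV1] at hx
      by_cases a' : ℓ ∈ S1'
      · have bf' : ℓ ∉ S2' := fun hb => (Finset.disjoint_left.1 hd') a' hb
        exact ⟨iff_of_true a a', iff_of_false bf bf'⟩
      · exfalso
        rw [if_neg a'] at hx
        by_cases b' : ℓ ∈ S2'
        · rw [if_pos b'] at hx
          exact absurd (congrArg Fin.val hx) (by simp)
        · rw [if_neg b'] at hx
          exact absurd (congrArg Fin.val hx) (by simp)
    · rw [if_neg a] at hx
      by_cases b : ℓ ∈ S2
      · rw [if_pos b, hφV2] at hx
        by_cases b' : ℓ ∈ S2'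
        · have af' : ℓ ∉ S1' := fun ha => (Finset.disjoint_left.1 hd') ha b'
          exact ⟨iff_of_false a af', iff_of_true b b'⟩
        · exfalso
          by_cases a' : ℓ ∈ S1'
          · rw [if_pos a'] at hx
            exact absurd (congrArg Fin.val hx) (by simp)
          · rw [if_neg a', if_neg b'] at hx
            exact absurd (congrArg Fin.val hx) (by simp)
      · rw [if_neg b, hφV0] at hx
        by_cases a' : ℓ ∈ S1'
        · exfalso
          rw [if_pos a'] at hx
          exact absurd (congrArg Fin.val hx) (by simp)
        · by_cases b' : ℓ ∈ S2'
          · exfalso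
            rw [if_neg a', if_pos b'] at hx
            exact absurd (congrArg Fin.val hx) (by simp)
          · exact ⟨iff_of_false a a', iff_of_false b b'⟩
  exact ⟨Finset.ext fun ℓ => (hval2 ℓ).1, Finset.ext fun ℓ => (hval2 ℓ).2⟩

lemma rep_inj : ∀ i j : IdxA ⊕ IdxB, (rep i).Equivalent (rep j) → i = j := by
  intro i j h
  match i, j with
  | Sum.inl ⟨S, hS⟩, Sum.inl ⟨S', hS'⟩ =>
    have := repA_inj h
    subst this
    rfl
  | Sum.inl ⟨S, hS⟩, Sum.inr ⟨⟨S1, S2⟩, hc1, hc2, hdj⟩ =>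
    exfalso
    obtain ⟨φV, φE, ψ, hsrc, htgt, hw, hψl, hψr, hm⟩ := h
    have hψ := MarkedFD.psi_fix ψ hψl hψr
    have hx := hm (Sum.inl i4)
    rw [show ψ (Sum.inl i4) = Sum.inl i4 from hψ _] at hx
    exact Sum.inr_ne_inl hx
  | Sum.inr ⟨⟨S1, S2⟩, hc1, hc2, hdj⟩, Sum.inl ⟨S, hS⟩ =>
    exfalso
    obtain ⟨φV, φE, ψ, hsrc, htgt, hw, hψl, hψr, hm⟩ := h
    have hψ := MarkedFD.psi_fix ψ hψl hψr
    have hx := hm (Sum.inl i4)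
    rw [show ψ (Sum.inl i4) = Sum.inl i4 from hψ _] at hx
    exact Sum.inl_ne_inr hx
  | Sum.inr ⟨⟨S1, S2⟩, hc1, hc2, hdj⟩, Sum.inr ⟨⟨S1', S2'⟩, hc1', hc2', hdj'⟩ =>
    obtain ⟨hh1, hh2⟩ := repB_inj h
    subst hh1
    subst hh2
    rfl

lemma rep_complete (X : MarkedFD 6 0 4 (fun _ => 1) [1, 1] []) :
    ∃ i : IdxA ⊕ IdxB, X.Equivalent (rep i) := by
  have K := exists_common X
  rcases K.case_split with ⟨hf2, hall⟩ | ⟨hf3, hone⟩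
  · obtain ⟨S, hc, heq⟩ := complete_A K hf2 hall
    exact ⟨Sum.inl ⟨S, hc⟩, heq⟩
  · obtain ⟨S1, S2, hc1, hc2, hdj, heq⟩ := complete_B K hf3 hone
    exact ⟨Sum.inr ⟨(S1, S2), hc1, hc2, hdj⟩, heq⟩

lemma rep_exists_unique (X : MarkedFD 6 0 4 (fun _ => 1) [1, 1] []) :
    ∃! i : IdxA ⊕ IdxB, X.Equivalent (rep i) := by
  obtain ⟨i, hi⟩ := rep_complete X
  refine ⟨i, hi, fun j hj => ?_⟩
  exact rep_inj j i (MarkedFD.Equivalent.trans' (MarkedFD.Equivalent.symm' hj) hi)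

end FD4
end FinalPart

/-- In `X₆'` (`k = 6`), for the class `d = 4[L] − Σ_{i=1}^6 [E_i]`
(so `a = 4`, `bᵢ = 1` for all `i`, and `d·[E] = 2`), the refined count of `d`-marked
floor diagrams of genus `0` and type `((1,1),∅)` is
`N_q^{(1,1),∅} = [2]_q⁴ + [4]_q² + 8[3]_q² + 44[2]_q² + 112`. -/
theorem refined_count_4L_type_11 :
    IsRefinedCount 6 0 4 (fun _ => 1) [1, 1] []
      (qInt 2 ^ 4 + qInt 4 ^ 2 + 8 * qInt 3 ^ 2 + 44 * qInt 2 ^ 2 + 112) := by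
  exact ⟨FD4.IdxA ⊕ FD4.IdxB, inferInstance, FD4.rep, FD4.rep_exists_unique,
    FD4.total_sum.symm⟩
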